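/- arXiv:2101.08161 — 9 statements merged into one kernel-verified Lean document; each statement's English description precedes it below -/
import Mathlib

section
/- A rational number p/r ∈ (0,1) in lowest terms has a finite Cantor series expansion with respect to Q (equivalently, two distinct Cantor series representations) if and only if there exists n₀ such that r divides q_1 q_2 ⋯ q_{n₀}. -/
open Finset

private lemma cantor_aux (q : ℕ → ℕ) (hq : ∀ k, 2 ≤ q k) :
    ∀ n a, a < ∏ i ∈ range n, q i →
    ∃ ε : ℕ → ℕ, (∀ k, ε k ≤ q k - 1) ∧ (∀ k, n ≤ k → ε k = 0) ∧
      (a : ℝ) / ∏ i ∈ range n, (q i : ℝ) =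
        ∑ k ∈ range n, (ε k : ℝ) / ∏ i ∈ range (k + 1), (q i : ℝ) := by
  intro n
  induction n with
  | zero =>
      intro a ha
      simp only [range_zero, prod_empty] at ha
      interval_cases a
      exact ⟨fun _ => 0, fun k => Nat.zero_le _, fun _ _ => rfl, by simp⟩
  | succ n ih =>
      intro a ha
      have hqn : 0 < q n := by have := hq n; omega
      have hb : a / q n < ∏ i ∈ range n, q i := by
        rw [Nat.div_lt_iff_lt_mul hqn]
        rwa [prod_range_succ] at ha
      obtain ⟨ε, hε1, hε2, hε3⟩ := ih (a / q n) hb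
      have hmod : a % q n < q n := Nat.mod_lt _ hqn
      refine ⟨Function.update ε n (a % q n), ?_, ?_, ?_⟩
      · intro k
        rcases eq_or_ne k n with rfl | h
        · rw [Function.update_self]; omega
        · rw [Function.update_of_ne h]; exact hε1 k
      · intro k hk
        rw [Function.update_of_ne (by omega)]
        exact hε2 k (by omega)
      · have hPpos : (0:ℝ) < ∏ i ∈ range n, (q i : ℝ) := by
          apply prod_pos; intro i _; exact_mod_cast (by have := hq i; omega : 0 < q i)
        have hP : (∏ i ∈ range n, (q i : ℝ)) ≠ 0 := ne_of_gt hPpos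
        have hq' : (q n : ℝ) ≠ 0 := by exact_mod_cast hqn.ne'
        have key : ((q n : ℝ)) * ((a / q n : ℕ) : ℝ) + ((a % q n : ℕ) : ℝ) = (a : ℝ) := by
          exact_mod_cast Nat.div_add_mod a (q n)
        rw [sum_range_succ, prod_range_succ]
        have hsum : ∑ k ∈ range n, ((Function.update ε n (a % q n) k : ℕ) : ℝ) /
            ∏ i ∈ range (k + 1), (q i : ℝ)
            = ∑ k ∈ range n, (ε k : ℝ) / ∏ i ∈ range (k + 1), (q i : ℝ) := by
          apply sum_congr rfl
          intro k hk
          rw [Function.update_of_ne (by simp at hk; omega)]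
        rw [hsum, ← hε3, Function.update_self]
        rw [← key]
        field_simp

/-- A rational `p/r ∈ (0,1)` in lowest terms has a finite Cantor series
expansion w.r.t. `Q = (q_k)` iff `r ∣ q_1 q_2 ⋯ q_{n₀}` for some `n₀`. (0-based indexing.) -/
theorem rational_finite_cantor_expansion_iff (q : ℕ → ℕ) (hq : ∀ k, 2 ≤ q k)
    (p r : ℕ) (hp : 0 < p) (hpr : p < r) (hcop : Nat.Coprime p r) :
    (∃ ε : ℕ → ℕ, (∀ k, ε k ≤ q k - 1) ∧ (∃ N, ∀ k, N ≤ k → ε k = 0) ∧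
        (p : ℝ) / r = ∑' k : ℕ, (ε k : ℝ) / ∏ i ∈ Finset.range (k + 1), (q i : ℝ))
      ↔ ∃ n₀ : ℕ, r ∣ ∏ i ∈ Finset.range n₀, q i := by
  have hr : 0 < r := by omega
  have hr' : (r : ℝ) ≠ 0 := by exact_mod_cast hr.ne'
  have hqpos : ∀ i, 0 < q i := fun i => by have := hq i; omega
  have hPpos : ∀ n, (0:ℝ) < ∏ i ∈ range n, (q i : ℝ) := by
    intro n; apply prod_pos; intro i _; exact_mod_cast hqpos i
  constructor
  · rintro ⟨ε, hb, ⟨N, hN⟩, heq⟩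
    refine ⟨N, ?_⟩
    have htsum : (∑' k : ℕ, (ε k : ℝ) / ∏ i ∈ range (k + 1), (q i : ℝ))
        = ∑ k ∈ range N, (ε k : ℝ) / ∏ i ∈ range (k + 1), (q i : ℝ) := by
      apply tsum_eq_sum
      intro b hb'
      rw [hN b (by simpa using hb')]
      simp
    rw [htsum] at heq
    set m : ℕ := ∑ k ∈ range N, ε k * ∏ i ∈ Ico (k+1) N, q i with hm
    have hmain : (p : ℝ) * ∏ i ∈ range N, (q i : ℝ) = (r : ℝ) * (m : ℝ) := by
      have hm' : (m : ℝ) = ∑ k ∈ range N, (ε k : ℝ) * ∏ i ∈ Ico (k+1) N, (q i : ℝ) := by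
        push_cast [hm]; rfl
      rw [hm']
      have hterm : ∀ k ∈ range N,
          ((ε k : ℝ) / ∏ i ∈ range (k + 1), (q i : ℝ)) * ∏ i ∈ range N, (q i : ℝ)
          = (ε k : ℝ) * ∏ i ∈ Ico (k+1) N, (q i : ℝ) := by
        intro k hk
        simp only [mem_range] at hk
        have hsplit : (∏ i ∈ range (k+1), (q i : ℝ)) * ∏ i ∈ Ico (k+1) N, (q i : ℝ)
            = ∏ i ∈ range N, (q i : ℝ) := prod_range_mul_prod_Ico _ (by omega)
        have hA : (∏ i ∈ range (k+1), (q i : ℝ)) ≠ 0 := (hPpos _).ne'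
        rw [← hsplit]
        field_simp
      rw [← sum_congr rfl hterm, ← Finset.sum_mul, ← heq]
      field_simp
    have hnat : p * ∏ i ∈ range N, q i = r * m := by
      exact_mod_cast hmain
    have hdvd : r ∣ p * ∏ i ∈ range N, q i := ⟨m, hnat⟩
    exact (Nat.Coprime.dvd_of_dvd_mul_left hcop.symm hdvd)
  · rintro ⟨n₀, hd⟩
    set P : ℕ := ∏ i ∈ range n₀, q i with hP
    have hPnat : 0 < P := prod_pos fun i _ => hqpos i
    have hrP : 0 < P / r := Nat.div_pos (Nat.le_of_dvd hPnat hd) hr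
    set a : ℕ := p * (P / r) with ha
    have haP : a < P := by
      calc a < r * (P / r) := by
              apply Nat.mul_lt_mul_of_lt_of_le hpr (le_refl _) hrP
           _ = P := Nat.mul_div_cancel' hd
    obtain ⟨ε, hε1, hε2, hε3⟩ := cantor_aux q hq n₀ a haP
    refine ⟨ε, hε1, ⟨n₀, hε2⟩, ?_⟩
    have htsum : (∑' k : ℕ, (ε k : ℝ) / ∏ i ∈ range (k + 1), (q i : ℝ))
        = ∑ k ∈ range n₀, (ε k : ℝ) / ∏ i ∈ range (k + 1), (q i : ℝ) := by
      apply tsum_eq_sum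
      intro b hb'
      rw [hε2 b (by simpa using hb')]
      simp
    rw [htsum, ← hε3]
    have hcast : ((P : ℕ) : ℝ) = ∏ i ∈ range n₀, (q i : ℝ) := by push_cast [hP]; rfl
    rw [← hcast]
    have hPr : ((P : ℕ) : ℝ) ≠ 0 := by exact_mod_cast hPnat.ne'
    rw [div_eq_div_iff hr' hPr]
    have h2 : p * P = a * r := by
      rw [ha, mul_assoc, Nat.div_mul_cancel hd]
    exact_mod_cast h2
end

section
/- A number x given by a Cantor series ∑_{k=1}^∞ ε_k/(q_1⋯q_k) is rational if and only if there exist n ≥ 0 and m ≥ 1 such that σⁿ(x) = σ^{n+m}(x), where σ is the shift operator on the digit sequence. -/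
/-- The shift operator of a (positive) Cantor expansion:
`σⁿ(x) = ∑_{k=n+1}^∞ ε_k/(q_{n+1}⋯q_k)` (0-based indexing). -/
noncomputable def cantorShift (q ε : ℕ → ℕ) (n : ℕ) : ℝ :=
  ∑' k : ℕ, (ε (n + k) : ℝ) / ∏ i ∈ Finset.Ico n (n + k + 1), (q i : ℝ)


section
variable (q ε : ℕ → ℕ)

lemma cprod_pos (hq : ∀ k, 2 ≤ q k) (s : Finset ℕ) :
    0 < ∏ i ∈ s, (q i : ℝ) := by
  apply Finset.prod_pos
  intro i _
  have := hq i
  positivity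

lemma cprod_ge (hq : ∀ k, 2 ≤ q k) (n k : ℕ) :
    (2:ℝ)^k ≤ ∏ i ∈ Finset.Ico n (n+k), (q i : ℝ) := by
  calc (2:ℝ)^k = ∏ i ∈ Finset.Ico n (n+k), (2:ℝ) := by
        rw [Finset.prod_const, Nat.card_Ico]; congr 1; omega
    _ ≤ _ := by
        apply Finset.prod_le_prod (fun i _ => by norm_num)
        intro i _
        exact_mod_cast hq i

lemma cterm_le (hq : ∀ k, 2 ≤ q k) (hε : ∀ k, ε k ≤ q k - 1) (n k : ℕ) :
    (ε (n + k) : ℝ) / ∏ i ∈ Finset.Ico n (n + k + 1), (q i : ℝ) ≤ (1/2)^k := by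
  have hsplit : ∏ i ∈ Finset.Ico n (n + k + 1), (q i : ℝ)
      = (∏ i ∈ Finset.Ico n (n + k), (q i : ℝ)) * (q (n+k) : ℝ) :=
    Finset.prod_Ico_succ_top (by omega) _
  have hP := cprod_pos q hq (Finset.Ico n (n+k))
  have hPk := cprod_ge q hq n k
  have hqpos : (0:ℝ) < q (n+k) := by have := hq (n+k); positivity
  have hεle : (ε (n+k) : ℝ) ≤ (q (n+k) : ℝ) := by
    have := hε (n+k); have := hq (n+k); exact_mod_cast by omega
  rw [hsplit]
  calc (ε (n + k) : ℝ) / ((∏ i ∈ Finset.Ico n (n + k), (q i : ℝ)) * (q (n+k):ℝ))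
      ≤ (q (n+k) : ℝ) / ((∏ i ∈ Finset.Ico n (n + k), (q i : ℝ)) * (q (n+k):ℝ)) := by
        gcongr
    _ = 1 / ∏ i ∈ Finset.Ico n (n + k), (q i : ℝ) := by
        field_simp
    _ ≤ (1/2)^k := by
        rw [div_pow, one_pow]
        apply one_div_le_one_div_of_le (by positivity) hPk

end


section
variable (q ε : ℕ → ℕ)

lemma csummable (hq : ∀ k, 2 ≤ q k) (hε : ∀ k, ε k ≤ q k - 1) (n : ℕ) :
    Summable (fun k => (ε (n + k) : ℝ) / ∏ i ∈ Finset.Ico n (n + k + 1), (q i : ℝ)) := by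
  apply Summable.of_nonneg_of_le (fun k => by positivity) (cterm_le q ε hq hε n)
  exact summable_geometric_of_lt_one (by norm_num) (by norm_num)

lemma cshift_nonneg (hq : ∀ k, 2 ≤ q k) (n : ℕ) : 0 ≤ cantorShift q ε n :=
  tsum_nonneg (fun k => by positivity)

lemma cshift_le_two (hq : ∀ k, 2 ≤ q k) (hε : ∀ k, ε k ≤ q k - 1) (n : ℕ) :
    cantorShift q ε n ≤ 2 := by
  have h := Summable.tsum_le_tsum (cterm_le q ε hq hε n) (csummable q ε hq hε n)
    (summable_geometric_of_lt_one (by norm_num) (by norm_num))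
  calc cantorShift q ε n ≤ ∑' k : ℕ, ((1:ℝ)/2)^k := h
    _ = 2 := by rw [tsum_geometric_of_lt_one (by norm_num) (by norm_num)]; norm_num

lemma cshift_rec (hq : ∀ k, 2 ≤ q k) (hε : ∀ k, ε k ≤ q k - 1) (n : ℕ) :
    cantorShift q ε n = ((ε n : ℝ) + cantorShift q ε (n+1)) / q n := by
  have hS := csummable q ε hq hε n
  have hqpos : (0:ℝ) < q n := by have := hq n; positivity
  rw [cantorShift, Summable.tsum_eq_zero_add hS]
  have h0 : (ε (n + 0) : ℝ) / ∏ i ∈ Finset.Ico n (n + 0 + 1), (q i : ℝ) = (ε n : ℝ) / q n := by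
    norm_num
  have hterm : ∀ k : ℕ, (ε (n + (k+1)) : ℝ) / ∏ i ∈ Finset.Ico n (n + (k+1) + 1), (q i : ℝ)
      = (1 / (q n : ℝ)) * ((ε ((n+1) + k) : ℝ) / ∏ i ∈ Finset.Ico (n+1) ((n+1) + k + 1), (q i : ℝ)) := by
    intro k
    have : ∏ i ∈ Finset.Ico n (n + (k+1) + 1), (q i : ℝ)
        = (q n : ℝ) * ∏ i ∈ Finset.Ico (n+1) (n + (k+1) + 1), (q i : ℝ) := by
      exact Finset.prod_eq_prod_Ico_succ_bot (by omega) _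
    rw [this]
    have h2 : n + (k+1) = (n+1) + k := by omega
    have h3 : n + (k+1) + 1 = (n+1) + k + 1 := by omega
    rw [h2]
    rw [eq_comm, mul_comm]
    rw [div_mul_div_comm]
    ring_nf
  simp only [hterm]
  rw [tsum_mul_left, h0, cantorShift]
  field_simp

end

section
variable (q ε : ℕ → ℕ)

lemma cshift_split (hq : ∀ k, 2 ≤ q k) (hε : ∀ k, ε k ≤ q k - 1) (n m : ℕ) :
    ∃ c : ℚ, cantorShift q ε n
      = (c : ℝ) + cantorShift q ε (n+m) / ∏ i ∈ Finset.Ico n (n+m), (q i : ℝ) := by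
  induction m with
  | zero => exact ⟨0, by simp⟩
  | succ m ih =>
    obtain ⟨c, hc⟩ := ih
    have hP : 0 < ∏ i ∈ Finset.Ico n (n+m), (q i : ℝ) := cprod_pos q hq _
    have hqpos : (0:ℝ) < q (n+m) := by have := hq (n+m); positivity
    have hrec := cshift_rec q ε hq hε (n+m)
    refine ⟨c + (ε (n+m) : ℚ) / ((∏ i ∈ Finset.Ico n (n+m), (q i : ℚ)) * (q (n+m) : ℚ)), ?_⟩
    have hprod : ∏ i ∈ Finset.Ico n (n+(m+1)), (q i : ℝ)
        = (∏ i ∈ Finset.Ico n (n+m), (q i : ℝ)) * (q (n+m) : ℝ) := by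
      rw [show n+(m+1) = (n+m)+1 by omega]
      exact Finset.prod_Ico_succ_top (by omega) _
    rw [hprod, hc, hrec, show n + (m+1) = (n+m)+1 by omega]
    push_cast
    field_simp
    ring

theorem cantor_rational_iff_shift_eq_aux (hq : ∀ k, 2 ≤ q k)
    (hε : ∀ k, ε k ≤ q k - 1) (x : ℝ)
    (hx : x = ∑' k : ℕ, (ε k : ℝ) / ∏ i ∈ Finset.range (k + 1), (q i : ℝ)) :
    (∃ r : ℚ, x = (r : ℝ)) ↔
      ∃ n m : ℕ, 1 ≤ m ∧ cantorShift q ε n = cantorShift q ε (n + m) := by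
  have hx0 : x = cantorShift q ε 0 := by
    rw [hx, cantorShift]
    apply tsum_congr
    intro k
    rw [Finset.range_eq_Ico]
    norm_num
  constructor
  · rintro ⟨r, hr⟩
    set b : ℕ := r.den with hb
    have hbpos : 0 < b := r.pos
    have key : ∀ n : ℕ, ∃ a : ℤ, cantorShift q ε n = (a : ℝ) / (b : ℝ) := by
      intro n
      induction n with
      | zero =>
        refine ⟨r.num, ?_⟩
        rw [← hx0, hr, Rat.cast_def]
      | succ n ih =>
        obtain ⟨a, ha⟩ := ih
        have hqpos : (0:ℝ) < q n := by have := hq n; positivity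
        have hrec := cshift_rec q ε hq hε n
        have hsucc : cantorShift q ε (n+1) = (q n : ℝ) * cantorShift q ε n - (ε n : ℝ) := by
          rw [hrec]; field_simp; ring
        refine ⟨(q n : ℤ) * a - (ε n : ℤ) * b, ?_⟩
        rw [hsucc, ha]
        have hbne : (b:ℝ) ≠ 0 := by positivity
        push_cast
        field_simp
    choose A hA using key
    have hbound : ∀ n, A n ∈ Finset.Icc (0:ℤ) (2*b) := by
      intro n
      have h0 := cshift_nonneg q ε hq n
      have h2 := cshift_le_two q ε hq hε n
      rw [hA n] at h0 h2
      have hbpos' : (0:ℝ) < b := by positivity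
      have l1 : (0:ℝ) ≤ (A n : ℝ) := by
        by_contra h
        push_neg at h
        have : (A n : ℝ) / b < 0 := div_neg_of_neg_of_pos h hbpos'
        linarith
      have l2 : (A n : ℝ) ≤ 2 * b := by
        have := (div_le_iff₀ hbpos').mp h2
        linarith
      simp only [Finset.mem_Icc]
      constructor
      · exact_mod_cast l1
      · exact_mod_cast l2
    have hpigeon : ∃ n₁ ∈ Finset.range (2*b+2), ∃ n₂ ∈ Finset.range (2*b+2),
        n₁ ≠ n₂ ∧ A n₁ = A n₂ := by
      apply Finset.exists_ne_map_eq_of_card_lt_of_maps_to (t := Finset.Icc (0:ℤ) (2*b))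
      · rw [Finset.card_range, Int.card_Icc]
        omega
      · intro n _
        exact hbound n
    obtain ⟨n₁, -, n₂, -, hne, haeq⟩ := hpigeon
    rcases lt_or_gt_of_ne hne with h | h
    · exact ⟨n₁, n₂ - n₁, by omega, by
        rw [hA, hA, haeq, show n₁ + (n₂ - n₁) = n₂ by omega]⟩
    · exact ⟨n₂, n₁ - n₂, by omega, by
        rw [hA, hA, ← haeq, show n₂ + (n₁ - n₂) = n₁ by omega]⟩
  · rintro ⟨n, m, hm, heq⟩
    obtain ⟨c, hc⟩ := cshift_split q ε hq hε n m
    set Pq : ℚ := ∏ i ∈ Finset.Ico n (n+m), (q i : ℚ) with hPq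
    have hcast : ((Pq : ℚ) : ℝ) = ∏ i ∈ Finset.Ico n (n+m), (q i : ℝ) := by
      rw [hPq]
      push_cast
      rfl
    have hPge : (2:ℝ) ≤ ((Pq : ℚ) : ℝ) := by
      rw [hcast]
      calc (2:ℝ) = 2^1 := by norm_num
        _ ≤ 2^m := by apply pow_le_pow_right₀ (by norm_num) hm
        _ ≤ _ := cprod_ge q hq n m
    have hPne : (Pq : ℚ) - 1 ≠ 0 := by
      intro h
      have : (Pq:ℚ) = 1 := by linarith [sub_eq_zero.mp h]
      rw [this] at hPge
      norm_num at hPge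
    have hPne' : ((Pq:ℚ):ℝ) ≠ 0 := by
      intro h; rw [h] at hPge; norm_num at hPge
    -- σⁿ = c + σⁿ / Pq
    rw [← heq, hcast.symm] at hc
    have hσ : cantorShift q ε n = ((c * Pq / (Pq - 1) : ℚ) : ℝ) := by
      have h1 : cantorShift q ε n * (((Pq:ℚ):ℝ) - 1) = (c:ℝ) * ((Pq:ℚ):ℝ) := by
        field_simp at hc
        linarith [hc]
      push_cast
      have hne : ((Pq:ℚ):ℝ) - 1 ≠ 0 := by
        intro h; have : ((Pq:ℚ):ℝ) = 1 := by linarith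
        rw [this] at hPge; norm_num at hPge
      field_simp
      linarith [h1]
    obtain ⟨c₀, hc₀⟩ := cshift_split q ε hq hε 0 n
    set P0q : ℚ := ∏ i ∈ Finset.Ico 0 n, (q i : ℚ) with hP0q
    have hc0cast : ((P0q : ℚ) : ℝ) = ∏ i ∈ Finset.Ico 0 n, (q i : ℝ) := by
      rw [hP0q]; push_cast; rfl
    have hP0pos : (0:ℝ) < ((P0q:ℚ):ℝ) := by
      rw [hc0cast]; exact cprod_pos q hq _
    refine ⟨c₀ + (c * Pq / (Pq - 1)) / P0q, ?_⟩
    rw [hx0, hc₀]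
    simp only [zero_add] at hσ ⊢
    rw [hσ, ← hc0cast]
    push_cast
    ring

end

/-- A number `x` given by a Cantor series is rational iff
`σⁿ(x) = σ^{n+m}(x)` for some `n ≥ 0`, `m ≥ 1`. -/
theorem cantor_rational_iff_shift_eq (q ε : ℕ → ℕ) (hq : ∀ k, 2 ≤ q k)
    (hε : ∀ k, ε k ≤ q k - 1) (x : ℝ)
    (hx : x = ∑' k : ℕ, (ε k : ℝ) / ∏ i ∈ Finset.range (k + 1), (q i : ℝ)) :
    (∃ r : ℚ, x = (r : ℝ)) ↔
      ∃ n m : ℕ, 1 ≤ m ∧ cantorShift q ε n = cantorShift q ε (n + m) := by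
  exact cantor_rational_iff_shift_eq_aux q ε hq hε x hx
end

section
/- Let q = min_n q_n and let ε ∈ {0, 1, …, q − 1} be fixed. Then σⁿ(x) = x = ε/(q − 1) for all n if and only if ε_n = ε·(q_n − 1)/(q − 1) is a nonnegative integer for all n ≥ 1. -/
open Finset

section Aux

variable {q ε : ℕ → ℕ}

lemma cs_prod_pos (hq : ∀ k, 2 ≤ q k) (n m : ℕ) : 0 < ∏ i ∈ Finset.Ico n m, (q i : ℝ) := by
  apply Finset.prod_pos
  intro i _
  have := hq i
  positivity

lemma cs_prod_ge (hq : ∀ k, 2 ≤ q k) (n k : ℕ) : (2 : ℝ) ^ k ≤ ∏ i ∈ Finset.Ico n (n + k), (q i : ℝ) := by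
  induction k with
  | zero => simp
  | succ k ih =>
      rw [show n + (k + 1) = (n + k) + 1 from rfl,
        Finset.prod_Ico_succ_top (Nat.le_add_right n k)]
      have h2 : (2 : ℝ) ≤ (q (n + k) : ℝ) := by exact_mod_cast hq (n + k)
      calc (2:ℝ)^(k+1) = 2^k * 2 := by ring
        _ ≤ (∏ i ∈ Finset.Ico n (n + k), (q i : ℝ)) * (q (n+k) : ℝ) := by
            apply mul_le_mul ih h2 (by norm_num) (le_of_lt (cs_prod_pos hq n (n+k)))

lemma cs_term_le (hq : ∀ k, 2 ≤ q k) (hε : ∀ k, ε k ≤ q k - 1) (n k : ℕ) :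
    (ε (n + k) : ℝ) / ∏ i ∈ Finset.Ico n (n + k + 1), (q i : ℝ) ≤ (1/2 : ℝ) ^ k := by
  have hqpos : (0:ℝ) < (q (n+k) : ℝ) := by
    have := hq (n+k); positivity
  have hprod : (2:ℝ)^k * (q (n+k) : ℝ) ≤ ∏ i ∈ Finset.Ico n (n + k + 1), (q i : ℝ) := by
    rw [Finset.prod_Ico_succ_top (Nat.le_add_right n k)]
    exact mul_le_mul_of_nonneg_right (cs_prod_ge hq n k) (le_of_lt hqpos)
  have hεle : (ε (n+k) : ℝ) ≤ (q (n+k) : ℝ) := by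
    have h1 : ε (n+k) ≤ q (n+k) := le_trans (hε (n+k)) (Nat.sub_le _ _)
    exact_mod_cast h1
  have h1 : (ε (n + k) : ℝ) / ∏ i ∈ Finset.Ico n (n + k + 1), (q i : ℝ)
      ≤ (q (n+k) : ℝ) / ((2:ℝ)^k * (q (n+k) : ℝ)) := by
    apply div_le_div₀ (le_of_lt hqpos) hεle (by positivity) hprod
  calc (ε (n + k) : ℝ) / ∏ i ∈ Finset.Ico n (n + k + 1), (q i : ℝ)
      ≤ (q (n+k) : ℝ) / ((2:ℝ)^k * (q (n+k) : ℝ)) := h1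
    _ = (1/2:ℝ)^k := by
        field_simp
        rw [← mul_pow]; norm_num

lemma cs_summable (hq : ∀ k, 2 ≤ q k) (hε : ∀ k, ε k ≤ q k - 1) (n : ℕ) :
    Summable (fun k : ℕ => (ε (n + k) : ℝ) / ∏ i ∈ Finset.Ico n (n + k + 1), (q i : ℝ)) := by
  apply Summable.of_nonneg_of_le (fun k => ?_) (fun k => cs_term_le hq hε n k)
    summable_geometric_two
  have := cs_prod_pos hq n (n+k+1)
  positivity

lemma cs_rec (hq : ∀ k, 2 ≤ q k) (hε : ∀ k, ε k ≤ q k - 1) (n : ℕ) :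
    cantorShift q ε n = (ε n : ℝ) / (q n : ℝ) + cantorShift q ε (n + 1) / (q n : ℝ) := by
  have hs := cs_summable hq hε n
  rw [cantorShift, Summable.tsum_eq_zero_add hs]
  have h0 : (ε (n + 0) : ℝ) / ∏ i ∈ Finset.Ico n (n + 0 + 1), (q i : ℝ)
      = (ε n : ℝ) / (q n : ℝ) := by
    simp
  rw [h0]
  congr 1
  have h1 : ∀ k : ℕ, (ε (n + (k + 1)) : ℝ) / ∏ i ∈ Finset.Ico n (n + (k + 1) + 1), (q i : ℝ)
      = (1 / (q n : ℝ)) * ((ε ((n+1) + k) : ℝ) / ∏ i ∈ Finset.Ico (n+1) ((n+1) + k + 1), (q i : ℝ)) := by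
    intro k
    have hb : n < n + (k + 1) + 1 := by omega
    rw [Finset.prod_eq_prod_Ico_succ_bot hb]
    rw [show n + (k + 1) + 1 = (n + 1) + k + 1 from by omega,
      show n + (k + 1) = (n + 1) + k from by omega]
    ring
  calc ∑' k : ℕ, (ε (n + (k + 1)) : ℝ) / ∏ i ∈ Finset.Ico n (n + (k + 1) + 1), (q i : ℝ)
      = ∑' k : ℕ, (1 / (q n : ℝ)) * ((ε ((n+1) + k) : ℝ) / ∏ i ∈ Finset.Ico (n+1) ((n+1) + k + 1), (q i : ℝ)) := by
        exact tsum_congr h1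
    _ = (1 / (q n : ℝ)) * cantorShift q ε (n + 1) := tsum_mul_left
    _ = cantorShift q ε (n + 1) / (q n : ℝ) := by ring

lemma cs_telescope (hq : ∀ k, 2 ≤ q k) (n : ℕ) :
    HasSum (fun k : ℕ => ((q (n + k) : ℝ) - 1) / ∏ i ∈ Finset.Ico n (n + k + 1), (q i : ℝ))
      1 := by
  set a : ℕ → ℝ := fun k => (∏ i ∈ Finset.Ico n (n + k), (q i : ℝ))⁻¹ with ha
  have hterm : ∀ k : ℕ, ((q (n + k) : ℝ) - 1) / ∏ i ∈ Finset.Ico n (n + k + 1), (q i : ℝ)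
      = a k - a (k + 1) := by
    intro k
    have hP : 0 < ∏ i ∈ Finset.Ico n (n + k), (q i : ℝ) := cs_prod_pos hq n (n+k)
    have hc : (0:ℝ) < (q (n+k) : ℝ) := by have := hq (n+k); positivity
    simp only [ha]
    rw [show n + (k+1) = (n + k) + 1 from rfl,
      Finset.prod_Ico_succ_top (Nat.le_add_right n k)]
    field_simp
  have hnonneg : ∀ k : ℕ, 0 ≤ ((q (n + k) : ℝ) - 1) / ∏ i ∈ Finset.Ico n (n + k + 1), (q i : ℝ) := by
    intro k
    apply div_nonneg _ (le_of_lt (cs_prod_pos hq n (n+k+1)))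
    have : (2:ℝ) ≤ (q (n+k) : ℝ) := by exact_mod_cast hq (n+k)
    linarith
  have hle : ∀ k : ℕ, ((q (n + k) : ℝ) - 1) / ∏ i ∈ Finset.Ico n (n + k + 1), (q i : ℝ)
      ≤ (1/2:ℝ)^k := by
    intro k
    have hqpos : (0:ℝ) < (q (n+k) : ℝ) := by have := hq (n+k); positivity
    have hprod : (2:ℝ)^k * (q (n+k) : ℝ) ≤ ∏ i ∈ Finset.Ico n (n + k + 1), (q i : ℝ) := by
      rw [Finset.prod_Ico_succ_top (Nat.le_add_right n k)]
      exact mul_le_mul_of_nonneg_right (cs_prod_ge hq n k) (le_of_lt hqpos)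
    calc ((q (n + k) : ℝ) - 1) / ∏ i ∈ Finset.Ico n (n + k + 1), (q i : ℝ)
        ≤ (q (n+k) : ℝ) / ((2:ℝ)^k * (q (n+k) : ℝ)) :=
          div_le_div₀ (le_of_lt hqpos) (by linarith) (by positivity) hprod
      _ = (1/2:ℝ)^k := by field_simp; rw [← mul_pow]; norm_num
  have hsum : Summable (fun k : ℕ => ((q (n + k) : ℝ) - 1) / ∏ i ∈ Finset.Ico n (n + k + 1), (q i : ℝ)) :=
    Summable.of_nonneg_of_le hnonneg hle summable_geometric_two
  rw [hsum.hasSum_iff_tendsto_nat]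
  have hps : ∀ N : ℕ, ∑ k ∈ Finset.range N,
      ((q (n + k) : ℝ) - 1) / ∏ i ∈ Finset.Ico n (n + k + 1), (q i : ℝ) = a 0 - a N := by
    intro N
    rw [Finset.sum_congr rfl (fun k _ => hterm k)]
    exact Finset.sum_range_sub' a N
  have ha0 : a 0 = 1 := by simp [ha]
  have haN : Filter.Tendsto a Filter.atTop (nhds 0) := by
    apply squeeze_zero (fun N => ?_) (fun N => ?_)
      (tendsto_pow_atTop_nhds_zero_of_lt_one (by norm_num : (0:ℝ) ≤ 1/2) (by norm_num))
    · exact le_of_lt (inv_pos.mpr (cs_prod_pos hq n (n+N)))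
    · simp only [ha]
      rw [show (1/2:ℝ)^N = ((2:ℝ)^N)⁻¹ by rw [one_div, inv_pow]]
      exact inv_anti₀ (by positivity) (cs_prod_ge hq n N)
  simp only [hps, ha0]
  have : Filter.Tendsto (fun N => 1 - a N) Filter.atTop (nhds (1 - 0)) :=
    Filter.Tendsto.const_sub 1 haN
  simpa using this

end Aux

/-- With `q = min_n q_n` and a fixed digit `ε₀ ∈ {0,…,q−1}`,
`σⁿ(x) = x = ε₀/(q−1)` holds for all `n` iff `ε_n = ε₀·(q_n − 1)/(q − 1)`
(a nonnegative integer, automatic since `ε_n : ℕ`) for all `n`. -/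
theorem cantor_fixed_point_iff (q ε : ℕ → ℕ) (hq : ∀ k, 2 ≤ q k)
    (hε : ∀ k, ε k ≤ q k - 1) (qm : ℕ) (hqm_le : ∀ n, qm ≤ q n) (hqm_mem : ∃ n, q n = qm)
    (ε₀ : ℕ) (hε₀ : ε₀ ≤ qm - 1) (x : ℝ)
    (hx : x = ∑' k : ℕ, (ε k : ℝ) / ∏ i ∈ Finset.range (k + 1), (q i : ℝ)) :
    ((∀ n : ℕ, cantorShift q ε n = x) ∧ x = (ε₀ : ℝ) / ((qm : ℝ) - 1))
      ↔ ∀ n : ℕ, (ε n : ℝ) = (ε₀ : ℝ) * ((q n : ℝ) - 1) / ((qm : ℝ) - 1) := by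
  obtain ⟨m, hm⟩ := hqm_mem
  have hqm2 : 2 ≤ qm := hm ▸ hq m
  have hqm1 : (1:ℝ) < (qm : ℝ) := by exact_mod_cast Nat.lt_of_lt_of_le Nat.one_lt_two hqm2
  have hden : (qm : ℝ) - 1 ≠ 0 := by linarith
  have hx0 : x = cantorShift q ε 0 := by
    rw [hx, cantorShift]
    apply tsum_congr
    intro k
    rw [Finset.range_eq_Ico]
    simp
  constructor
  · rintro ⟨hσ, hxv⟩ n
    have hqn : (q n : ℝ) ≠ 0 := by
      have := hq n; positivity
    have r := cs_rec hq hε n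
    rw [hσ n, hσ (n+1)] at r
    -- x = ε n / q n + x / q n
    have h1 : x * (q n : ℝ) = (ε n : ℝ) + x := by
      field_simp at r
      linarith
    have h2 : (ε n : ℝ) = x * ((q n : ℝ) - 1) := by linarith [h1]
    rw [h2, hxv]
    ring
  · intro h
    have key : ∀ n : ℕ, cantorShift q ε n = (ε₀ : ℝ) / ((qm : ℝ) - 1) := by
      intro n
      have hterm : ∀ k : ℕ, (ε (n + k) : ℝ) / ∏ i ∈ Finset.Ico n (n + k + 1), (q i : ℝ)
          = ((ε₀ : ℝ) / ((qm : ℝ) - 1)) *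
            (((q (n + k) : ℝ) - 1) / ∏ i ∈ Finset.Ico n (n + k + 1), (q i : ℝ)) := by
        intro k
        rw [h (n + k)]
        ring
      have := (cs_telescope hq n).mul_left ((ε₀ : ℝ) / ((qm : ℝ) - 1))
      rw [cantorShift]
      calc ∑' k : ℕ, (ε (n + k) : ℝ) / ∏ i ∈ Finset.Ico n (n + k + 1), (q i : ℝ)
          = ∑' k : ℕ, ((ε₀ : ℝ) / ((qm : ℝ) - 1)) *
            (((q (n + k) : ℝ) - 1) / ∏ i ∈ Finset.Ico n (n + k + 1), (q i : ℝ)) :=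
            tsum_congr hterm
        _ = (ε₀ : ℝ) / ((qm : ℝ) - 1) := by rw [this.tsum_eq]; ring
    have hxv : x = (ε₀ : ℝ) / ((qm : ℝ) - 1) := by rw [hx0, key 0]
    exact ⟨fun n => by rw [key n, hxv], hxv⟩
end

section
/- Every real number x in the interval [a', a''] admits a representation x = ∑_{n=1}^∞ a_n ε_n/(q_1⋯q_n) with digits ε_n ∈ {0, …, q_n − 1}, where a' = −∑_{k ∈ N_B} (q_k − 1)/(q_1⋯q_k) and a'' = 1 − ∑_{k ∈ N_B} (q_k − 1)/(q_1⋯q_k). -/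
-- The sign `a_n`: `-1` if `n ∈ N_B`, `1` otherwise.
open Classical in
noncomputable def cantorSign (B : Set ℕ) (n : ℕ) : ℝ :=
  if n ∈ B then -1 else 1

namespace CantorAux

noncomputable def P (q : ℕ → ℕ) (n : ℕ) : ℝ := ∏ i ∈ Finset.range n, (q i : ℝ)

variable (q : ℕ → ℕ)

lemma P_pos (hq : ∀ k, 2 ≤ q k) (n : ℕ) : 0 < P q n := by
  apply Finset.prod_pos
  intro i _
  exact_mod_cast Nat.lt_of_lt_of_le Nat.zero_lt_two (hq i)

lemma P_succ (n : ℕ) : P q (n + 1) = P q n * q n := Finset.prod_range_succ _ _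

lemma two_pow_le_P (hq : ∀ k, 2 ≤ q k) (n : ℕ) : (2:ℝ)^n ≤ P q n := by
  calc (2:ℝ)^n = ∏ _i ∈ Finset.range n, (2:ℝ) := by
        rw [Finset.prod_const, Finset.card_range]
    _ ≤ ∏ i ∈ Finset.range n, (q i : ℝ) :=
        Finset.prod_le_prod (fun i _ => by norm_num) (fun i _ => by exact_mod_cast hq i)

lemma tendsto_inv_P (hq : ∀ k, 2 ≤ q k) :
    Filter.Tendsto (fun n => (P q n)⁻¹) Filter.atTop (nhds 0) := by
  apply Filter.Tendsto.inv_tendsto_atTop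
  apply Filter.tendsto_atTop_mono (two_pow_le_P q hq)
  exact tendsto_pow_atTop_atTop_of_one_lt (by norm_num)

lemma sum_g (hq : ∀ k, 2 ≤ q k) (n : ℕ) :
    ∑ i ∈ Finset.range n, ((q i : ℝ) - 1) / P q (i+1) = 1 - (P q n)⁻¹ := by
  induction n with
  | zero => simp [P]
  | succ n ih =>
    rw [Finset.sum_range_succ, ih, P_succ]
    have h1 : P q n ≠ 0 := (P_pos q hq n).ne'
    have h2 : (q n : ℝ) ≠ 0 := Nat.cast_ne_zero.mpr (by have := hq n; omega)
    field_simp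
    ring

lemma hasSum_g (hq : ∀ k, 2 ≤ q k) :
    HasSum (fun n => ((q n : ℝ) - 1) / P q (n+1)) 1 := by
  rw [hasSum_iff_tendsto_nat_of_nonneg]
  · simp only [sum_g q hq]
    have h := (tendsto_inv_P q hq).const_sub 1
    simpa using h
  · intro i
    apply div_nonneg _ (P_pos q hq (i+1)).le
    have : (2:ℝ) ≤ q i := by exact_mod_cast hq i
    linarith

lemma exists_digits (hq : ∀ k, 2 ≤ q k) (y : ℝ) (hy : y ∈ Set.Icc (0:ℝ) 1) :
    ∃ δ : ℕ → ℕ, (∀ n, δ n ≤ q n - 1) ∧ HasSum (fun n => (δ n : ℝ) / P q (n+1)) y := by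
  obtain ⟨hy0, hy1⟩ := hy
  rcases eq_or_lt_of_le hy1 with rfl | hy1
  · refine ⟨fun n => q n - 1, fun n => le_refl _, ?_⟩
    have hcast : (fun n => ((q n - 1 : ℕ) : ℝ) / P q (n+1))
        = fun n => ((q n : ℝ) - 1) / P q (n+1) := by
      funext n
      rw [Nat.cast_sub (by have := hq n; omega), Nat.cast_one]
    rw [hcast]
    exact hasSum_g q hq
  · set s : ℕ → ℕ := fun n => ⌊y * P q n⌋₊ with hs_def
    have hs_le : ∀ n, (s n : ℝ) ≤ y * P q n := fun n =>
      Nat.floor_le (by have := (P_pos q hq n).le; positivity)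
    have hs_lt : ∀ n, y * P q n < s n + 1 := fun n => Nat.lt_floor_add_one _
    have key : ∀ n, q n * s n ≤ s (n+1) := by
      intro n
      apply Nat.le_floor
      push_cast
      calc (q n : ℝ) * s n ≤ q n * (y * P q n) := by
            apply mul_le_mul_of_nonneg_left (hs_le n) (by positivity)
        _ = y * P q (n+1) := by rw [P_succ]; ring
    have key2 : ∀ n, s (n+1) < q n * s n + q n := by
      intro n
      have h1 : (s (n+1) : ℝ) ≤ y * P q (n+1) := hs_le (n+1)
      have h2 : y * P q (n+1) < (q n : ℝ) * s n + q n := by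
        rw [P_succ]
        have hqpos : (0:ℝ) < q n := by
          exact_mod_cast Nat.lt_of_lt_of_le Nat.zero_lt_two (hq n)
        nlinarith [hs_lt n]
      have : (s (n+1) : ℝ) < ((q n * s n + q n : ℕ) : ℝ) := by push_cast; linarith
      exact_mod_cast this
    refine ⟨fun n => s (n+1) - q n * s n, ?_, ?_⟩
    · intro n
      show s (n+1) - q n * s n ≤ q n - 1
      have := key n
      have := key2 n
      omega
    · have hδcast : ∀ n, ((s (n+1) - q n * s n : ℕ) : ℝ) = (s (n+1) : ℝ) - q n * s n := by
        intro n
        rw [Nat.cast_sub (key n)]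
        push_cast
        ring
      have hpart : ∀ n, ∑ i ∈ Finset.range n,
          ((s (i+1) - q i * s i : ℕ) : ℝ) / P q (i+1) = (s n : ℝ) / P q n := by
        intro n
        induction n with
        | zero =>
          have hs0 : s 0 = 0 := by
            simp only [hs_def]
            rw [show P q 0 = 1 from Finset.prod_range_zero _, mul_one]
            exact Nat.floor_eq_zero.mpr hy1
          simp [hs0]
        | succ n ih =>
          rw [Finset.sum_range_succ, ih, hδcast, P_succ]
          have h1 : P q n ≠ 0 := (P_pos q hq n).ne'
          have h2 : (q n : ℝ) ≠ 0 := Nat.cast_ne_zero.mpr (by have := hq n; omega)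
          field_simp
          ring
      rw [hasSum_iff_tendsto_nat_of_nonneg]
      · simp only [hpart]
        apply tendsto_of_tendsto_of_tendsto_of_le_of_le
          (g := fun n => y - (P q n)⁻¹) (h := fun _ => y)
        · simpa using (tendsto_inv_P q hq).const_sub y
        · exact tendsto_const_nhds
        · intro n
          have hP := P_pos q hq n
          have h3 : y * P q n * (P q n)⁻¹ ≤ ((s n : ℝ) + 1) * (P q n)⁻¹ :=
            mul_le_mul_of_nonneg_right (hs_lt n).le (by positivity)
          rw [mul_assoc, mul_inv_cancel₀ hP.ne', mul_one] at h3
          have h4 : ((s n : ℝ) + 1) * (P q n)⁻¹ = (s n : ℝ) * (P q n)⁻¹ + (P q n)⁻¹ := by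
            ring
          show y - (P q n)⁻¹ ≤ (s n : ℝ) / P q n
          rw [div_eq_mul_inv]
          linarith
        · intro n
          have hP := P_pos q hq n
          show (s n : ℝ) / P q n ≤ y
          rw [div_le_iff₀ hP]
          linarith [hs_le n]
      · intro i
        exact div_nonneg (Nat.cast_nonneg _) (P_pos q hq (i+1)).le

end CantorAux

open CantorAux in
theorem exists_sign_variable_cantor_representation (B : Set ℕ) (q : ℕ → ℕ)
    (hq : ∀ k, 2 ≤ q k) (x : ℝ)
    (hx : x ∈ Set.Icc
      (-(∑' k : ℕ, Set.indicator B
          (fun k => ((q k : ℝ) - 1) / ∏ i ∈ Finset.range (k + 1), (q i : ℝ)) k))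
      (1 - ∑' k : ℕ, Set.indicator B
          (fun k => ((q k : ℝ) - 1) / ∏ i ∈ Finset.range (k + 1), (q i : ℝ)) k)) :
    ∃ ε : ℕ → ℕ, (∀ n, ε n ≤ q n - 1) ∧
      x = ∑' n : ℕ, cantorSign B n * (ε n : ℝ) / ∏ i ∈ Finset.range (n + 1), (q i : ℝ) := by
  classical
  set g : ℕ → ℝ := fun k => ((q k : ℝ) - 1) / ∏ i ∈ Finset.range (k + 1), (q i : ℝ) with hg
  have hgP : g = fun k => ((q k : ℝ) - 1) / P q (k+1) := rfl
  have hgsum : HasSum g 1 := by rw [hgP]; exact hasSum_g q hq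
  have hind : Summable (Set.indicator B g) := hgsum.summable.indicator B
  set S := ∑' k, Set.indicator B g k with hS_def
  have hS : HasSum (Set.indicator B g) S := hind.hasSum
  obtain ⟨h1, h2⟩ := hx
  have hy : x + S ∈ Set.Icc (0:ℝ) 1 := ⟨by linarith, by linarith⟩
  obtain ⟨δ, hδle, hδsum⟩ := exists_digits q hq (x + S) hy
  refine ⟨fun n => if n ∈ B then q n - 1 - δ n else δ n, ?_, ?_⟩
  · intro n
    by_cases h : n ∈ B
    · simp only [if_pos h]
      exact Nat.sub_le _ _
    · simp only [if_neg h]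
      exact hδle n
  · have key : (fun n => cantorSign B n *
        (((if n ∈ B then q n - 1 - δ n else δ n : ℕ)) : ℝ) / P q (n+1))
        = fun n => (δ n : ℝ) / P q (n+1) - Set.indicator B g n := by
      funext n
      by_cases h : n ∈ B
      · rw [Set.indicator_of_mem h, cantorSign, if_pos h, if_pos h, hgP]
        rw [Nat.cast_sub (hδle n), Nat.cast_sub (by have := hq n; omega), Nat.cast_one]
        ring
      · rw [Set.indicator_of_notMem h, cantorSign, if_neg h, if_neg h]
        ring
    have hfin : HasSum (fun n => cantorSign B n *
        (((if n ∈ B then q n - 1 - δ n else δ n : ℕ)) : ℝ) / P q (n+1)) x := by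
      rw [key]
      have := hδsum.sub hS
      simpa using this
    exact hfin.tsum_eq.symm
end

section
/- The cylinder Λ_{c_1…c_m} of rank m of a sign-variable Cantor expansion, i.e., the set of all sums ∑_{i=1}^{m} a_i c_i/(q_1⋯q_i) + ∑_{j=m+1}^∞ a_j ε_j/(q_1⋯q_j) over all admissible digit choices ε_j ∈ {0,…,q_j−1}, equals the closed interval [S − ∑_{m < k, k ∈ N_B} (q_k−1)/(q_1⋯q_k), S + ∑_{m < k, k ∉ N_B} (q_k−1)/(q_1⋯q_k)], where S = ∑_{i=1}^{m} a_i c_i/(q_1⋯q_i). -/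
open Filter Topology

open Filter Topology

-- R q n = product of first n q's
noncomputable def cantorProd (q : ℕ → ℕ) (n : ℕ) : ℝ := ∏ i ∈ Finset.range n, (q i : ℝ)

lemma cantorProd_pos (q : ℕ → ℕ) (hq : ∀ k, 2 ≤ q k) (n : ℕ) : 0 < cantorProd q n := by
  apply Finset.prod_pos
  intro i _
  have := hq i
  positivity

lemma cantorProd_succ (q : ℕ → ℕ) (n : ℕ) :
    cantorProd q (n + 1) = cantorProd q n * (q n : ℝ) := Finset.prod_range_succ _ _

lemma two_pow_le_cantorProd (q : ℕ → ℕ) (hq : ∀ k, 2 ≤ q k) (n : ℕ) :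
    (2 : ℝ) ^ n ≤ cantorProd q n := by
  induction n with
  | zero => simp [cantorProd]
  | succ n ih =>
    rw [cantorProd_succ, pow_succ]
    have h2 : (2 : ℝ) ≤ (q n : ℝ) := by exact_mod_cast hq n
    have := cantorProd_pos q hq n
    nlinarith [pow_pos (by norm_num : (0:ℝ) < 2) n]

lemma cantorProd_inv_tendsto (q : ℕ → ℕ) (hq : ∀ k, 2 ≤ q k) (m : ℕ) :
    Tendsto (fun N => 1 / cantorProd q (m + N)) atTop (𝓝 0) := by
  have h0 : Tendsto (fun N : ℕ => ((1:ℝ)/2) ^ (m + N)) atTop (𝓝 0) := by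
    have := tendsto_pow_atTop_nhds_zero_of_lt_one (by norm_num : (0:ℝ) ≤ 1/2)
      (by norm_num : (1:ℝ)/2 < 1)
    exact (this.comp (tendsto_add_atTop_nat m)).congr (fun N => by simp [Nat.add_comm])
  refine squeeze_zero (fun N => by have := cantorProd_pos q hq (m+N); positivity)
    (fun N => ?_) h0
  have hp := cantorProd_pos q hq (m + N)
  rw [one_div, div_pow, one_pow, one_div]
  exact inv_anti₀ (by positivity) (two_pow_le_cantorProd q hq (m + N))

-- telescoping sum
lemma cantor_hasSum_tele (q : ℕ → ℕ) (hq : ∀ k, 2 ≤ q k) (m : ℕ) :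
    HasSum (fun j => ((q (m + j) : ℝ) - 1) / cantorProd q (m + j + 1)) (1 / cantorProd q m) := by
  have hnn : ∀ j, 0 ≤ ((q (m + j) : ℝ) - 1) / cantorProd q (m + j + 1) := by
    intro j
    have h1 : (1:ℝ) ≤ (q (m+j) : ℝ) := by
      have := hq (m+j); exact_mod_cast le_trans (by norm_num) this
    have := cantorProd_pos q hq (m + j + 1)
    exact div_nonneg (by linarith) this.le
  rw [hasSum_iff_tendsto_nat_of_nonneg hnn]
  have key : ∀ N, ∑ j ∈ Finset.range N, ((q (m + j) : ℝ) - 1) / cantorProd q (m + j + 1)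
      = 1 / cantorProd q m - 1 / cantorProd q (m + N) := by
    intro N
    have : ∀ j, ((q (m + j) : ℝ) - 1) / cantorProd q (m + j + 1)
        = 1 / cantorProd q (m + j) - 1 / cantorProd q (m + j + 1) := by
      intro j
      have hp := cantorProd_pos q hq (m + j)
      have hqp : (0:ℝ) < (q (m+j) : ℝ) := by
        have := hq (m+j)
        exact_mod_cast lt_of_lt_of_le (by norm_num) this
      rw [cantorProd_succ]
      field_simp
    simp only [this]
    have := Finset.sum_range_sub' (fun j => 1 / cantorProd q (m + j)) N
    simpa [add_assoc] using this
  simp only [key]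
  have := (cantorProd_inv_tendsto q hq m).const_sub (1 / cantorProd q m)
  simpa using this


noncomputable def cantorRem (q : ℕ → ℕ) (m : ℕ) (x : ℝ) : ℕ → ℝ
  | 0 => x
  | (j+1) => cantorRem q m x j
      - (min ⌊cantorRem q m x j * cantorProd q (m + j + 1)⌋₊ (q (m + j) - 1) : ℕ)
        / cantorProd q (m + j + 1)

noncomputable def cantorDig (q : ℕ → ℕ) (m : ℕ) (x : ℝ) (j : ℕ) : ℕ :=
  min ⌊cantorRem q m x j * cantorProd q (m + j + 1)⌋₊ (q (m + j) - 1)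

lemma cantorRem_succ (q : ℕ → ℕ) (m : ℕ) (x : ℝ) (j : ℕ) :
    cantorRem q m x (j + 1)
      = cantorRem q m x j - (cantorDig q m x j : ℝ) / cantorProd q (m + j + 1) := rfl

lemma cantorRem_mem (q : ℕ → ℕ) (hq : ∀ k, 2 ≤ q k) (m : ℕ) (x : ℝ)
    (hx : x ∈ Set.Icc 0 (1 / cantorProd q m)) :
    ∀ j, cantorRem q m x j ∈ Set.Icc 0 (1 / cantorProd q (m + j)) := by
  intro j
  induction j with
  | zero => simpa [cantorRem] using hx
  | succ j ih =>
    obtain ⟨h0, h1⟩ := ih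
    have hQpos : 0 < cantorProd q (m + j + 1) := cantorProd_pos q hq (m + j + 1)
    have hPpos : 0 < cantorProd q (m + j) := cantorProd_pos q hq (m + j)
    have hqq : 2 ≤ q (m + j) := hq (m + j)
    have hqqR : (2:ℝ) ≤ (q (m + j) : ℝ) := by exact_mod_cast hqq
    have hQeq : cantorProd q (m + j + 1) = cantorProd q (m + j) * (q (m + j) : ℝ) :=
      cantorProd_succ q (m + j)
    set r := cantorRem q m x j with hr
    set Q := cantorProd q (m + j + 1) with hQdef
    have hrQ : r * Q ≤ (q (m + j) : ℝ) := by
      have h1' : r * cantorProd q (m + j) ≤ 1 := by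
        calc r * cantorProd q (m + j)
            ≤ (1 / cantorProd q (m + j)) * cantorProd q (m + j) :=
              mul_le_mul_of_nonneg_right h1 hPpos.le
          _ = 1 := by field_simp
      calc r * Q = (r * cantorProd q (m + j)) * (q (m + j) : ℝ) := by rw [hQeq]; ring
        _ ≤ 1 * (q (m + j) : ℝ) := by
            apply mul_le_mul_of_nonneg_right h1' (by positivity)
        _ = (q (m + j) : ℝ) := one_mul _
    have hrQ0 : 0 ≤ r * Q := mul_nonneg h0 hQpos.le
    have hidx : m + (j + 1) = m + j + 1 := rfl
    rw [cantorRem_succ, cantorDig, Set.mem_Icc, hidx, ← hQdef, ← hr]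
    by_cases h : ⌊r * Q⌋₊ ≤ q (m + j) - 1
    · rw [min_eq_left h]
      have hfl : (⌊r * Q⌋₊ : ℝ) ≤ r * Q := Nat.floor_le hrQ0
      have hfu : r * Q < (⌊r * Q⌋₊ : ℝ) + 1 := Nat.lt_floor_add_one _
      constructor
      · rw [sub_nonneg, div_le_iff₀ hQpos]
        exact hfl
      · have heq2 : r - (⌊r * Q⌋₊ : ℝ) / Q = (r * Q - (⌊r * Q⌋₊ : ℝ)) / Q := by
          field_simp
        rw [heq2, div_le_div_iff₀ hQpos hQpos]
        nlinarith
    · push_neg at h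
      have h2 : q (m + j) ≤ ⌊r * Q⌋₊ := by omega
      have h3 : ((q (m + j) : ℕ) : ℝ) ≤ r * Q := (Nat.le_floor_iff hrQ0).mp h2
      have h4 : r * Q = (q (m + j) : ℝ) := le_antisymm hrQ h3
      rw [min_eq_right h.le]
      have hcast : ((q (m + j) - 1 : ℕ) : ℝ) = (q (m + j) : ℝ) - 1 := by
        have h5 : 1 ≤ q (m + j) := by omega
        push_cast [h5]
        ring
      rw [hcast]
      have heq2 : r - ((q (m + j) : ℝ) - 1) / Q = (r * Q - ((q (m + j) : ℝ) - 1)) / Q := by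
        field_simp
      rw [heq2, h4]
      constructor
      · exact div_nonneg (by linarith) hQpos.le
      · rw [div_le_div_iff₀ hQpos hQpos]
        nlinarith

lemma cantor_partial (q : ℕ → ℕ) (m : ℕ) (x : ℝ) (N : ℕ) :
    ∑ j ∈ Finset.range N, (cantorDig q m x j : ℝ) / cantorProd q (m + j + 1)
      = x - cantorRem q m x N := by
  induction N with
  | zero => simp [cantorRem]
  | succ N ih =>
    rw [Finset.sum_range_succ, ih, cantorRem_succ]
    ring

lemma cantor_surj (q : ℕ → ℕ) (hq : ∀ k, 2 ≤ q k) (m : ℕ) (x : ℝ)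
    (hx : x ∈ Set.Icc 0 (1 / cantorProd q m)) :
    ∃ d : ℕ → ℕ, (∀ n, d n ≤ q n - 1) ∧
      HasSum (fun j => (d (m + j) : ℝ) / cantorProd q (m + j + 1)) x := by
  refine ⟨fun n => if m ≤ n then cantorDig q m x (n - m) else 0, ?_, ?_⟩
  · intro n
    by_cases h : m ≤ n
    · simp only [h, if_true]
      have := min_le_right ⌊cantorRem q m x (n - m) * cantorProd q (m + (n - m) + 1)⌋₊
        (q (m + (n - m)) - 1)
      rw [cantorDig]
      have hmn : m + (n - m) = n := by omega
      rw [hmn] at this ⊢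
      exact this
    · simp [h]
  · have heq : ∀ j, ((if m ≤ m + j then cantorDig q m x (m + j - m) else 0 : ℕ) : ℝ)
        / cantorProd q (m + j + 1) = (cantorDig q m x j : ℝ) / cantorProd q (m + j + 1) := by
      intro j
      simp
    simp only [heq]
    have hnn : ∀ j, 0 ≤ (cantorDig q m x j : ℝ) / cantorProd q (m + j + 1) := by
      intro j
      have := cantorProd_pos q hq (m + j + 1)
      positivity
    rw [hasSum_iff_tendsto_nat_of_nonneg hnn]
    have hps : ∀ N, ∑ j ∈ Finset.range N, (cantorDig q m x j : ℝ) / cantorProd q (m + j + 1)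
        = x - cantorRem q m x N := cantor_partial q m x
    simp only [hps]
    have hrem : Tendsto (fun N => cantorRem q m x N) atTop (𝓝 0) := by
      have hup := cantorProd_inv_tendsto q hq m
      refine squeeze_zero (fun N => (cantorRem_mem q hq m x hx N).1)
        (fun N => (cantorRem_mem q hq m x hx N).2) hup
    have := hrem.const_sub x
    simpa using this


noncomputable def cantorG (q : ℕ → ℕ) (n : ℕ) : ℝ := ((q n : ℝ) - 1) / cantorProd q (n + 1)

lemma cantor_pointwise' (B : Set ℕ) (q : ℕ → ℕ) (hq : ∀ k, 2 ≤ q k) (n e d : ℕ)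
    (hd : d ≤ q n - 1)
    (hB : n ∈ B → e + d = q n - 1) (hBc : n ∉ B → e = d) :
    cantorSign B n * (e : ℝ) / cantorProd q (n + 1)
      = (d : ℝ) / cantorProd q (n + 1) - Set.indicator B (cantorG q) n := by
  have h1 : 1 ≤ q n := by have := hq n; omega
  by_cases h : n ∈ B
  · have hs : cantorSign B n = -1 := if_pos h
    rw [hs, Set.indicator_of_mem h]
    have he : e = q n - 1 - d := by have := hB h; omega
    have hcast : (e : ℝ) = (q n : ℝ) - 1 - (d : ℝ) := by
      subst he
      rw [Nat.cast_sub hd, Nat.cast_sub h1, Nat.cast_one]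
    rw [hcast]
    simp only [cantorG]
    ring
  · have hs : cantorSign B n = 1 := if_neg h
    rw [hs, Set.indicator_of_notMem h]
    rw [hBc h]
    ring

lemma cantor_tail_summable (q : ℕ → ℕ) (hq : ∀ k, 2 ≤ q k) (m : ℕ) (f : ℕ → ℝ)
    (h0 : ∀ j, 0 ≤ f j)
    (h1 : ∀ j, f j ≤ ((q (m + j) : ℝ) - 1) / cantorProd q (m + j + 1)) :
    Summable f ∧ (0 ≤ ∑' j, f j) ∧ (∑' j, f j) ≤ 1 / cantorProd q m := by
  have htele := cantor_hasSum_tele q hq m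
  have hs : Summable f := Summable.of_nonneg_of_le h0 h1 htele.summable
  refine ⟨hs, tsum_nonneg h0, ?_⟩
  calc ∑' j, f j ≤ ∑' j, ((q (m + j) : ℝ) - 1) / cantorProd q (m + j + 1) :=
        Summable.tsum_le_tsum h1 hs htele.summable
    _ = 1 / cantorProd q m := htele.tsum_eq



/-- The cylinder `Λ_{c_1…c_m}` of a sign-variable Cantor expansion equals
the closed interval `[S − ∑_{m<k, k∈N_B}(q_k−1)/(q_1⋯q_k), S + ∑_{m<k, k∉N_B}(q_k−1)/(q_1⋯q_k)]`
where `S = ∑_{i=1}^m a_i c_i/(q_1⋯q_i)`. (0-based indexing: the base digits are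
`c 0, …, c (m-1)`.) -/
theorem sign_variable_cylinder_eq_Icc (B : Set ℕ) (q : ℕ → ℕ) (hq : ∀ k, 2 ≤ q k)
    (m : ℕ) (c : ℕ → ℕ) (hc : ∀ i, i < m → c i ≤ q i - 1) :
    {x : ℝ | ∃ ε : ℕ → ℕ, (∀ j, ε j ≤ q j - 1) ∧
        x = (∑ i ∈ Finset.range m,
              cantorSign B i * (c i : ℝ) / ∏ j ∈ Finset.range (i + 1), (q j : ℝ))
          + ∑' j : ℕ, cantorSign B (m + j) * (ε (m + j) : ℝ)
              / ∏ i ∈ Finset.range (m + j + 1), (q i : ℝ)}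
      = Set.Icc
        ((∑ i ∈ Finset.range m,
            cantorSign B i * (c i : ℝ) / ∏ j ∈ Finset.range (i + 1), (q j : ℝ))
          - ∑' k : ℕ, Set.indicator B
              (fun n => ((q n : ℝ) - 1) / ∏ i ∈ Finset.range (n + 1), (q i : ℝ)) (m + k))
        ((∑ i ∈ Finset.range m,
            cantorSign B i * (c i : ℝ) / ∏ j ∈ Finset.range (i + 1), (q j : ℝ))
          + ∑' k : ℕ, Set.indicator Bᶜ
              (fun n => ((q n : ℝ) - 1) / ∏ i ∈ Finset.range (n + 1), (q i : ℝ)) (m + k)) := by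
  classical
  have hProd : ∀ n : ℕ, (∏ i ∈ Finset.range (n + 1), (q i : ℝ)) = cantorProd q (n + 1) :=
    fun n => rfl
  simp only [hProd]
  have hGfun : (fun n => ((q n : ℝ) - 1) / cantorProd q (n + 1)) = cantorG q := rfl
  rw [hGfun]
  have hGnn : ∀ n, 0 ≤ cantorG q n := by
    intro n
    have hp := cantorProd_pos q hq (n + 1)
    have h2 : (2:ℝ) ≤ (q n : ℝ) := by exact_mod_cast hq n
    simp only [cantorG]
    exact div_nonneg (by linarith) hp.le
  have htele : HasSum (fun k => cantorG q (m + k)) (1 / cantorProd q m) :=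
    cantor_hasSum_tele q hq m
  have hIndNonneg : ∀ (s : Set ℕ), ∀ k : ℕ, 0 ≤ Set.indicator s (cantorG q) (m + k) :=
    fun s k => Set.indicator_nonneg (fun a _ => hGnn a) _
  have hIndLe : ∀ (s : Set ℕ), ∀ k : ℕ,
      Set.indicator s (cantorG q) (m + k) ≤ ((q (m + k) : ℝ) - 1) / cantorProd q (m + k + 1) :=
    fun s k => Set.indicator_le_self' (fun a _ => hGnn a) _
  obtain ⟨hSumB, hL0, hLle⟩ :=
    cantor_tail_summable q hq m _ (hIndNonneg B) (hIndLe B)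
  obtain ⟨hSumBc, hU0, hUle⟩ :=
    cantor_tail_summable q hq m _ (hIndNonneg Bᶜ) (hIndLe Bᶜ)
  have hLU : (∑' k, Set.indicator B (cantorG q) (m + k))
      + (∑' k, Set.indicator Bᶜ (cantorG q) (m + k)) = 1 / cantorProd q m := by
    rw [← Summable.tsum_add hSumB hSumBc]
    have hptw : ∀ k : ℕ, Set.indicator B (cantorG q) (m + k)
        + Set.indicator Bᶜ (cantorG q) (m + k) = cantorG q (m + k) := fun k =>
      congrFun (Set.indicator_self_add_compl B (cantorG q)) (m + k)
    rw [tsum_congr hptw]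
    exact htele.tsum_eq
  ext x
  simp only [Set.mem_setOf_eq, Set.mem_Icc]
  constructor
  · rintro ⟨ε, hε, rfl⟩
    set d : ℕ → ℕ := fun n => if n ∈ B then q n - 1 - ε n else ε n with hddef
    have hd : ∀ n, d n ≤ q n - 1 := by
      intro n
      have hεn := hε n
      simp only [hddef]
      by_cases h : n ∈ B <;> simp [h] <;> omega
    have hdcast : ∀ j : ℕ, (d (m + j) : ℝ) / cantorProd q (m + j + 1)
        ≤ ((q (m + j) : ℝ) - 1) / cantorProd q (m + j + 1) := by
      intro j
      have hp := cantorProd_pos q hq (m + j + 1)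
      have h2 : 1 ≤ q (m + j) := by have := hq (m + j); omega
      have : (d (m + j) : ℝ) ≤ (q (m + j) : ℝ) - 1 := by
        have := hd (m + j)
        have h3 : (d (m + j) : ℝ) ≤ ((q (m + j) - 1 : ℕ) : ℝ) := by exact_mod_cast this
        rwa [Nat.cast_sub h2, Nat.cast_one] at h3
      gcongr
    have hdnn : ∀ j : ℕ, 0 ≤ (d (m + j) : ℝ) / cantorProd q (m + j + 1) := by
      intro j
      have hp := cantorProd_pos q hq (m + j + 1)
      positivity
    obtain ⟨hdsum, hy0, hyle⟩ := cantor_tail_summable q hq m _ hdnn hdcast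
    have hpt : ∀ j : ℕ, cantorSign B (m + j) * (ε (m + j) : ℝ) / cantorProd q (m + j + 1)
        = (d (m + j) : ℝ) / cantorProd q (m + j + 1)
          - Set.indicator B (cantorG q) (m + j) := by
      intro j
      refine cantor_pointwise' B q hq (m + j) (ε (m + j)) (d (m + j)) (hd (m + j)) ?_ ?_
      · intro h
        simp only [hddef, if_pos h]
        have := hε (m + j)
        omega
      · intro h
        simp only [hddef, if_neg h]
    rw [tsum_congr hpt, Summable.tsum_sub hdsum hSumB]
    constructor
    · linarith
    · have : (∑' j, (d (m + j) : ℝ) / cantorProd q (m + j + 1))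
          ≤ (∑' k, Set.indicator B (cantorG q) (m + k))
            + (∑' k, Set.indicator Bᶜ (cantorG q) (m + k)) := by
        rw [hLU]; exact hyle
      linarith
  · rintro ⟨hx1, hx2⟩
    set S : ℝ := ∑ i ∈ Finset.range m, cantorSign B i * (c i : ℝ) / cantorProd q (i + 1)
      with hSdef
    set L : ℝ := ∑' k, Set.indicator B (cantorG q) (m + k) with hLdef
    set y : ℝ := x - (S - L) with hydef
    have hy : y ∈ Set.Icc 0 (1 / cantorProd q m) := by
      constructor
      · simp only [hydef]; linarith
      · simp only [hydef]
        linarith [hLU, hx2]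
    obtain ⟨d, hd, hdHasSum⟩ := cantor_surj q hq m y hy
    refine ⟨fun n => if n ∈ B then q n - 1 - d n else d n, ?_, ?_⟩
    · intro n
      have hdn := hd n
      by_cases h : n ∈ B <;> simp [h] <;> omega
    · have hpt : ∀ j : ℕ, cantorSign B (m + j)
          * (((if m + j ∈ B then q (m + j) - 1 - d (m + j) else d (m + j)) : ℕ) : ℝ)
          / cantorProd q (m + j + 1)
          = (d (m + j) : ℝ) / cantorProd q (m + j + 1)
            - Set.indicator B (cantorG q) (m + j) := by
        intro j
        refine cantor_pointwise' B q hq (m + j) _ (d (m + j)) (hd (m + j)) ?_ ?_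
        · intro h
          rw [if_pos h]
          have := hd (m + j)
          have h2 := hq (m + j)
          omega
        · intro h
          rw [if_neg h]
      rw [tsum_congr hpt, Summable.tsum_sub hdHasSum.summable hSumB]
      rw [hdHasSum.tsum_eq, ← hLdef, hydef]
      ring
end

section
/- A number x represented by a sign-variable Cantor series is rational if and only if there exist n ≥ 0 and m ≥ 1 such that σⁿ(x) = σ^{n+m}(x). -/
/-- The shift operator of a sign-variable Cantor expansion (0-based indexing). -/
noncomputable def signCantorShift (B : Set ℕ) (q ε : ℕ → ℕ) (n : ℕ) : ℝ :=
  ∑' k : ℕ, cantorSign B (n + k) * (ε (n + k) : ℝ) / ∏ i ∈ Finset.Ico n (n + k + 1), (q i : ℝ)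

namespace SVC

noncomputable def Qr (q : ℕ → ℕ) (n : ℕ) : ℝ := ∏ i ∈ Finset.range n, (q i : ℝ)

def Qn (q : ℕ → ℕ) (n : ℕ) : ℕ := ∏ i ∈ Finset.range n, q i

noncomputable def f (B : Set ℕ) (q ε : ℕ → ℕ) (n : ℕ) : ℝ :=
  cantorSign B n * (ε n : ℝ) / Qr q (n + 1)

lemma sign_abs (B : Set ℕ) (n : ℕ) : |cantorSign B n| = 1 := by
  unfold cantorSign; split <;> norm_num

lemma Qr_pos (q : ℕ → ℕ) (hq : ∀ k, 2 ≤ q k) (n : ℕ) : 0 < Qr q n := by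
  apply Finset.prod_pos
  intro i _
  have := hq i
  positivity

lemma Qn_cast (q : ℕ → ℕ) (n : ℕ) : ((Qn q n : ℕ) : ℝ) = Qr q n := by
  simp [Qn, Qr]

lemma Qr_succ (q : ℕ → ℕ) (n : ℕ) : Qr q (n + 1) = Qr q n * q n :=
  Finset.prod_range_succ _ _

lemma Qr_ge (q : ℕ → ℕ) (hq : ∀ k, 2 ≤ q k) (n : ℕ) : (2:ℝ)^n ≤ Qr q n := by
  induction n with
  | zero => simp [Qr]
  | succ n ih =>
    rw [Qr_succ, pow_succ]
    have h2 : (2:ℝ) ≤ q n := by exact_mod_cast hq n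
    have := Qr_pos q hq n
    nlinarith

lemma f_abs_le (B : Set ℕ) (q ε : ℕ → ℕ) (hq : ∀ k, 2 ≤ q k) (hε : ∀ k, ε k ≤ q k - 1)
    (n : ℕ) : |f B q ε n| ≤ 1 / Qr q n - 1 / Qr q (n + 1) := by
  have hqn := Qr_pos q hq n
  have hqn1 := Qr_pos q hq (n + 1)
  have hεn : (ε n : ℝ) ≤ (q n : ℝ) - 1 := by
    have h1 : 1 ≤ q n := le_trans one_le_two (hq n)
    have := hε n
    have : (ε n : ℝ) ≤ ((q n - 1 : ℕ) : ℝ) := by exact_mod_cast this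
    rwa [Nat.cast_sub h1, Nat.cast_one] at this
  have habs : |f B q ε n| = (ε n : ℝ) / Qr q (n + 1) := by
    unfold f
    rw [abs_div, abs_mul, sign_abs, one_mul, abs_of_nonneg (Nat.cast_nonneg _),
      abs_of_pos hqn1]
  rw [habs, Qr_succ]
  have h2 : (2:ℝ) ≤ q n := by exact_mod_cast hq n
  rw [div_sub_div _ _ (ne_of_gt hqn) (by rw [← Qr_succ]; exact ne_of_gt hqn1)]
  rw [div_le_div_iff₀ (by rw [← Qr_succ]; exact hqn1) (by positivity)]
  ring_nf
  nlinarith [mul_le_mul_of_nonneg_right hεn (by positivity : (0:ℝ) ≤ Qr q n ^ 2 * q n)]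

lemma f_abs_le_geom (B : Set ℕ) (q ε : ℕ → ℕ) (hq : ∀ k, 2 ≤ q k) (hε : ∀ k, ε k ≤ q k - 1)
    (n : ℕ) : |f B q ε n| ≤ (1/2:ℝ)^n := by
  have h := f_abs_le B q ε hq hε n
  have h1 : 1 / Qr q n ≤ (1/2:ℝ)^n := by
    rw [div_pow, one_pow]
    exact one_div_le_one_div_of_le (by positivity) (Qr_ge q hq n)
  have := Qr_pos q hq (n + 1)
  have : 0 < 1 / Qr q (n+1) := by positivity
  linarith

lemma f_summable (B : Set ℕ) (q ε : ℕ → ℕ) (hq : ∀ k, 2 ≤ q k) (hε : ∀ k, ε k ≤ q k - 1) :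
    Summable (f B q ε) := by
  apply Summable.of_norm_bounded (summable_geometric_of_lt_one (by norm_num) (by norm_num : (1/2:ℝ) < 1))
  intro n
  rw [Real.norm_eq_abs]
  exact f_abs_le_geom B q ε hq hε n


lemma tail_summable (B : Set ℕ) (q ε : ℕ → ℕ) (hq : ∀ k, 2 ≤ q k) (hε : ∀ k, ε k ≤ q k - 1)
    (n : ℕ) : Summable (fun k => f B q ε (n + k)) := by
  have := (f_summable B q ε hq hε).comp_injective (add_right_injective n)
  exact this

lemma tail_abs_summable (B : Set ℕ) (q ε : ℕ → ℕ) (hq : ∀ k, 2 ≤ q k) (hε : ∀ k, ε k ≤ q k - 1)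
    (n : ℕ) : Summable (fun k => |f B q ε (n + k)|) :=
  (tail_summable B q ε hq hε n).abs

lemma tail_bound (B : Set ℕ) (q ε : ℕ → ℕ) (hq : ∀ k, 2 ≤ q k) (hε : ∀ k, ε k ≤ q k - 1)
    (n : ℕ) : ∑' k, |f B q ε (n + k)| ≤ 1 / Qr q n := by
  apply Summable.tsum_le_of_sum_le (tail_abs_summable B q ε hq hε n)
  intro u
  obtain ⟨K, hK⟩ := u.exists_nat_subset_range
  have h1 : ∑ k ∈ u, |f B q ε (n + k)| ≤ ∑ k ∈ Finset.range K, |f B q ε (n + k)| :=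
    Finset.sum_le_sum_of_subset_of_nonneg hK (fun i _ _ => abs_nonneg _)
  have h2 : ∑ k ∈ Finset.range K, |f B q ε (n + k)| ≤
      ∑ k ∈ Finset.range K, (1 / Qr q (n + k) - 1 / Qr q (n + k + 1)) := by
    apply Finset.sum_le_sum
    intro i _
    exact f_abs_le B q ε hq hε (n + i)
  have h3 : ∑ k ∈ Finset.range K, (1 / Qr q (n + k) - 1 / Qr q (n + k + 1)) =
      1 / Qr q n - 1 / Qr q (n + K) := by
    have := Finset.sum_range_sub' (fun k => 1 / Qr q (n + k)) K
    simpa [add_assoc] using this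
  have h4 : 0 < 1 / Qr q (n + K) := by
    have := Qr_pos q hq (n + K); positivity
  linarith

lemma prod_Ico_eq (q : ℕ → ℕ) (hq : ∀ k, 2 ≤ q k) (n k : ℕ) :
    ∏ i ∈ Finset.Ico n (n + k + 1), (q i : ℝ) = Qr q (n + k + 1) / Qr q n := by
  rw [eq_div_iff (ne_of_gt (Qr_pos q hq n)), mul_comm]
  exact Finset.prod_range_mul_prod_Ico _ (by omega)

lemma shift_eq (B : Set ℕ) (q ε : ℕ → ℕ) (hq : ∀ k, 2 ≤ q k) (hε : ∀ k, ε k ≤ q k - 1)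
    (n : ℕ) : signCantorShift B q ε n = Qr q n * ∑' k, f B q ε (n + k) := by
  rw [← tsum_mul_left]
  unfold signCantorShift
  apply tsum_congr
  intro k
  rw [prod_Ico_eq q hq n k]
  have h1 := Qr_pos q hq n
  have h2 := Qr_pos q hq (n + k + 1)
  unfold f
  field_simp

lemma shift_formula (B : Set ℕ) (q ε : ℕ → ℕ) (hq : ∀ k, 2 ≤ q k) (hε : ∀ k, ε k ≤ q k - 1)
    (x : ℝ)
    (hx : x = ∑' n : ℕ, cantorSign B n * (ε n : ℝ) / ∏ i ∈ Finset.range (n + 1), (q i : ℝ))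
    (n : ℕ) :
    signCantorShift B q ε n = Qr q n * (x - ∑ k ∈ Finset.range n, f B q ε k) := by
  rw [shift_eq B q ε hq hε n]
  congr 1
  have hsum := f_summable B q ε hq hε
  have h := Summable.sum_add_tsum_nat_add n hsum
  have hxf : (∑' n : ℕ, cantorSign B n * (ε n : ℝ) / ∏ i ∈ Finset.range (n + 1), (q i : ℝ))
      = ∑' k, f B q ε k := tsum_congr fun k => by simp [f, Qr]
  have hco : ∑' k, f B q ε (n + k) = ∑' k, f B q ε (k + n) :=
    tsum_congr fun k => by rw [add_comm]
  rw [hco, hx, hxf, ← h]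
  ring

lemma shift_bound (B : Set ℕ) (q ε : ℕ → ℕ) (hq : ∀ k, 2 ≤ q k) (hε : ∀ k, ε k ≤ q k - 1)
    (n : ℕ) : |signCantorShift B q ε n| ≤ 1 := by
  rw [shift_eq B q ε hq hε n, abs_mul, abs_of_pos (Qr_pos q hq n)]
  have hs : Summable fun k => ‖f B q ε (n + k)‖ := by
    simpa only [Real.norm_eq_abs] using tail_abs_summable B q ε hq hε n
  have h1 := norm_tsum_le_tsum_norm hs
  simp only [Real.norm_eq_abs] at h1
  have h2 := tail_bound B q ε hq hε n
  have h3 := Qr_pos q hq n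
  calc Qr q n * |∑' k, f B q ε (n + k)| ≤ Qr q n * (1 / Qr q n) := by
        apply mul_le_mul_of_nonneg_left (le_trans h1 h2) (le_of_lt h3)
    _ = 1 := by field_simp

open Classical in
noncomputable def sQ (B : Set ℕ) (q ε : ℕ → ℕ) (n : ℕ) : ℚ :=
  ∑ k ∈ Finset.range n, (if k ∈ B then (-1:ℚ) else 1) * ε k / (Qn q (k+1))

lemma sQ_cast (B : Set ℕ) (q ε : ℕ → ℕ) (n : ℕ) :
    ((sQ B q ε n : ℚ) : ℝ) = ∑ k ∈ Finset.range n, f B q ε k := by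
  rw [sQ, Rat.cast_sum]
  apply Finset.sum_congr rfl
  intro k _
  rw [Rat.cast_div, Rat.cast_mul]
  simp only [Rat.cast_natCast]
  rw [Qn_cast]
  unfold f
  congr 2
  by_cases h : k ∈ B <;> simp [cantorSign, h]

open Classical in
noncomputable def TZ (B : Set ℕ) (q ε : ℕ → ℕ) (n : ℕ) : ℤ :=
  ∑ k ∈ Finset.range n, (if k ∈ B then (-1:ℤ) else 1) * ε k * ((Qn q n) / (Qn q (k+1)) : ℕ)

lemma Qn_dvd (q : ℕ → ℕ) {a b : ℕ} (h : a ≤ b) : Qn q a ∣ Qn q b :=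
  Finset.prod_dvd_prod_of_subset _ _ q (Finset.range_subset_range.mpr h)

lemma Qn_pos (q : ℕ → ℕ) (hq : ∀ k, 2 ≤ q k) (n : ℕ) : 0 < Qn q n := by
  apply Finset.prod_pos
  intro i _
  have := hq i
  omega

lemma TZ_cast (B : Set ℕ) (q ε : ℕ → ℕ) (hq : ∀ k, 2 ≤ q k) (n : ℕ) :
    ((TZ B q ε n : ℤ) : ℝ) = Qr q n * ∑ k ∈ Finset.range n, f B q ε k := by
  classical
  rw [Finset.mul_sum, TZ, Int.cast_sum]
  apply Finset.sum_congr rfl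
  intro k hk
  have hk' : k + 1 ≤ n := Finset.mem_range.mp hk
  have hdvd := Qn_dvd q hk'
  have hne : (Qn q (k+1) : ℝ) ≠ 0 := by
    have := Qn_pos q hq (k+1); positivity
  have hcast : (((Qn q n) / (Qn q (k+1)) : ℕ) : ℝ) = Qr q n / Qr q (k+1) := by
    rw [Nat.cast_div hdvd hne, Qn_cast, Qn_cast]
  simp only [Int.cast_mul, Int.cast_natCast]
  rw [hcast]
  unfold f
  have hsign : ((if k ∈ B then (-1:ℤ) else 1 : ℤ) : ℝ) = cantorSign B k := by
    by_cases h : k ∈ B <;> simp [cantorSign, h]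
  rw [hsign]
  have h1 := Qr_pos q hq (k+1)
  field_simp

lemma Qr_strictMono (q : ℕ → ℕ) (hq : ∀ k, 2 ≤ q k) : StrictMono (Qr q) := by
  apply strictMono_nat_of_lt_succ
  intro n
  rw [Qr_succ]
  have h2 : (2:ℝ) ≤ q n := by exact_mod_cast hq n
  have := Qr_pos q hq n
  nlinarith

end SVC

open SVC in
/-- A number `x` represented by a sign-variable Cantor series is rational
iff there exist `n ≥ 0` and `m ≥ 1` such that `σⁿ(x) = σ^{n+m}(x)`. -/
theorem sign_variable_rational_iff_shift_eq (B : Set ℕ) (q ε : ℕ → ℕ) (hq : ∀ k, 2 ≤ q k)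
    (hε : ∀ k, ε k ≤ q k - 1) (x : ℝ)
    (hx : x = ∑' n : ℕ, cantorSign B n * (ε n : ℝ) / ∏ i ∈ Finset.range (n + 1), (q i : ℝ)) :
    (∃ r : ℚ, x = (r : ℝ)) ↔
      ∃ n m : ℕ, 1 ≤ m ∧ signCantorShift B q ε n = signCantorShift B q ε (n + m) := by
  have hsf := shift_formula B q ε hq hε x hx
  constructor
  · rintro ⟨r, hr⟩
    set d : ℕ := r.den with hd
    have hdpos : 0 < d := r.pos
    set z : ℕ → ℤ := fun n => r.num * (Qn q n) - (d : ℤ) * TZ B q ε n with hzdef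
    have hz : ∀ n, (z n : ℝ) = d * signCantorShift B q ε n := by
      intro n
      have hnum : ((r.num : ℤ) : ℝ) = (r : ℝ) * (d : ℝ) := by
        exact_mod_cast congrArg (fun t : ℚ => (t : ℝ)) (Rat.mul_den_eq_num r).symm
      rw [hsf n]
      simp only [hzdef, Int.cast_sub, Int.cast_mul, Int.cast_natCast, Qn_cast,
        TZ_cast B q ε hq n, hnum, hr]
      ring
    have hzb : ∀ n, |z n| ≤ (d : ℤ) := by
      intro n
      have h1 : |(z n : ℝ)| ≤ (d : ℝ) := by
        rw [hz n, abs_mul, abs_of_nonneg (by positivity : (0:ℝ) ≤ (d:ℝ))]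
        calc (d:ℝ) * |signCantorShift B q ε n| ≤ (d:ℝ) * 1 :=
              mul_le_mul_of_nonneg_left (shift_bound B q ε hq hε n) (by positivity)
          _ = d := mul_one _
      rw [← Int.cast_abs] at h1
      exact_mod_cast h1
    haveI : Finite (Set.Icc (-(d:ℤ)) (d:ℤ)) := (Set.finite_Icc _ _).to_subtype
    set w : ℕ → Set.Icc (-(d:ℤ)) (d:ℤ) := fun n =>
      ⟨z n, Set.mem_Icc.mpr ⟨neg_le_of_abs_le (hzb n), le_of_abs_le (hzb n)⟩⟩ with hw
    obtain ⟨n₁, n₂, hne, he⟩ := Finite.exists_ne_map_eq_of_infinite w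
    have hzz : z n₁ = z n₂ := by
      have := congrArg Subtype.val he
      simpa [hw] using this
    have hσ : signCantorShift B q ε n₁ = signCantorShift B q ε n₂ := by
      have h1 : (d:ℝ) * signCantorShift B q ε n₁ = (d:ℝ) * signCantorShift B q ε n₂ := by
        rw [← hz n₁, ← hz n₂, hzz]
      have hd0 : (d:ℝ) ≠ 0 := by positivity
      exact mul_left_cancel₀ hd0 h1
    rcases hne.lt_or_gt with h | h
    · exact ⟨n₁, n₂ - n₁, by omega, by rw [show n₁ + (n₂ - n₁) = n₂ by omega]; exact hσ⟩
    · exact ⟨n₂, n₁ - n₂, by omega, by rw [show n₂ + (n₁ - n₂) = n₁ by omega]; exact hσ.symm⟩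
  · rintro ⟨n, m, hm, h⟩
    set N := n + m with hN
    rw [hsf n, hsf N] at h
    have hQlt : Qr q n < Qr q N := Qr_strictMono q hq (by omega)
    have hden : (Qr q N) - Qr q n ≠ 0 := by linarith
    refine ⟨((Qn q N : ℚ) * sQ B q ε N - (Qn q n : ℚ) * sQ B q ε n) /
      ((Qn q N : ℚ) - (Qn q n : ℚ)), ?_⟩
    have hdenQ : ((Qn q N : ℚ) - (Qn q n : ℚ)) ≠ 0 := by
      intro hc
      apply hden
      have : ((((Qn q N : ℚ) - (Qn q n : ℚ)) : ℚ) : ℝ) = 0 := by rw [hc]; simp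
      rwa [Rat.cast_sub, Rat.cast_natCast, Rat.cast_natCast, Qn_cast, Qn_cast] at this
    rw [Rat.cast_div, Rat.cast_sub, Rat.cast_mul, Rat.cast_mul, Rat.cast_sub,
      Rat.cast_natCast, Rat.cast_natCast, Qn_cast, Qn_cast, sQ_cast, sQ_cast]
    rw [eq_div_iff hden]
    linear_combination -h
end

section
/- If x = u/v is rational with v ≥ 1, u ∈ ℤ, |u| ≤ v, and x has sign-variable Cantor expansion with digits (ε_n), then σⁿ(x) = u_n/v where u_n = u·q_1⋯q_n − v·∑_{j=1}^{n} a_j ε_j q_{j+1}⋯q_n ∈ ℤ satisfies |u_n| ≤ v; consequently there exist n and m ≥ 1 with u_n = u_{n+m}, and there is an infinite set of indices on which u_n is constant. -/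
-- The sign `a_n` as an integer.
open Classical in
noncomputable def cantorSignZ (B : Set ℕ) (n : ℕ) : ℤ :=
  if n ∈ B then -1 else 1

/-- The integer `u_n = u·q_1⋯q_n − v·∑_{j=1}^{n} a_j ε_j q_{j+1}⋯q_n` (0-based). -/
noncomputable def signCantorNum (B : Set ℕ) (q ε : ℕ → ℕ) (u : ℤ) (v : ℕ) (n : ℕ) : ℤ :=
  u * ∏ i ∈ Finset.range n, (q i : ℤ)
    - v * ∑ j ∈ Finset.range n,
        cantorSignZ B j * (ε j : ℤ) * ∏ i ∈ Finset.Ico (j + 1) n, (q i : ℤ)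

section Aux

variable (B : Set ℕ) (q ε : ℕ → ℕ)

lemma abs_cantorSign (n : ℕ) : |cantorSign B n| = 1 := by
  unfold cantorSign; split <;> norm_num

lemma cast_cantorSignZ (n : ℕ) : ((cantorSignZ B n : ℤ) : ℝ) = cantorSign B n := by
  unfold cantorSign cantorSignZ; split <;> norm_num

lemma qprod_pos (hq : ∀ k, 2 ≤ q k) (s : Finset ℕ) : (0:ℝ) < ∏ i ∈ s, (q i : ℝ) := by
  apply Finset.prod_pos
  intro i _
  have := hq i
  exact_mod_cast Nat.lt_of_lt_of_le Nat.zero_lt_two this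

/-- the term of the shift series -/
noncomputable def sTerm (n k : ℕ) : ℝ :=
  cantorSign B (n + k) * (ε (n + k) : ℝ) / ∏ i ∈ Finset.Ico n (n + k + 1), (q i : ℝ)

lemma sTerm_abs_le (hq : ∀ k, 2 ≤ q k) (hε : ∀ k, ε k ≤ q k - 1) (n k : ℕ) :
    |sTerm B q ε n k| ≤ (∏ i ∈ Finset.Ico n (n + k), (q i : ℝ))⁻¹
      - (∏ i ∈ Finset.Ico n (n + k + 1), (q i : ℝ))⁻¹ := by
  have hP : (0:ℝ) < ∏ i ∈ Finset.Ico n (n + k), (q i : ℝ) := qprod_pos q hq _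
  have hsplit : ∏ i ∈ Finset.Ico n (n + k + 1), (q i : ℝ)
      = (∏ i ∈ Finset.Ico n (n + k), (q i : ℝ)) * (q (n + k) : ℝ) :=
    Finset.prod_Ico_succ_top (Nat.le_add_right n k) _
  have hqk : (2:ℝ) ≤ (q (n + k) : ℝ) := by exact_mod_cast hq (n + k)
  have hε' : (ε (n + k) : ℝ) ≤ (q (n + k) : ℝ) - 1 := by
    have h1 : 1 ≤ q (n + k) := le_trans one_le_two (hq (n + k))
    have := hε (n + k)
    have : (ε (n + k) : ℝ) ≤ ((q (n + k) - 1 : ℕ) : ℝ) := by exact_mod_cast this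
    rwa [Nat.cast_sub h1, Nat.cast_one] at this
  have habs : |sTerm B q ε n k|
      = (ε (n + k) : ℝ) / ∏ i ∈ Finset.Ico n (n + k + 1), (q i : ℝ) := by
    unfold sTerm
    rw [abs_div, abs_mul, abs_cantorSign, one_mul, abs_of_nonneg (by positivity),
      abs_of_pos (qprod_pos q hq _)]
  have h0 : (0:ℝ) < (q (n+k) : ℝ) := lt_of_lt_of_le two_pos hqk
  have hkey : (∏ i ∈ Finset.Ico n (n + k), (q i : ℝ))⁻¹
      - ((∏ i ∈ Finset.Ico n (n + k), (q i : ℝ)) * (q (n + k) : ℝ))⁻¹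
      = ((q (n + k) : ℝ) - 1) / ((∏ i ∈ Finset.Ico n (n + k), (q i : ℝ)) * (q (n + k) : ℝ)) := by
    field_simp
  rw [habs, hsplit, hkey]
  gcongr

lemma dk_le (hq : ∀ k, 2 ≤ q k) (n k : ℕ) : (∏ i ∈ Finset.Ico n (n + k), (q i : ℝ))⁻¹ ≤ (2:ℝ)⁻¹ ^ k := by
  have h2 : (2:ℝ) ^ k ≤ ∏ i ∈ Finset.Ico n (n + k), (q i : ℝ) := by
    calc (2:ℝ) ^ k = ∏ _i ∈ Finset.Ico n (n + k), (2:ℝ) := by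
          rw [Finset.prod_const, Nat.card_Ico, Nat.add_sub_cancel_left]
      _ ≤ _ := Finset.prod_le_prod (by intro i _; norm_num)
          (by intro i _; exact_mod_cast hq i)
  rw [inv_pow]
  exact inv_anti₀ (by positivity) h2

lemma sTerm_summable_abs (hq : ∀ k, 2 ≤ q k) (hε : ∀ k, ε k ≤ q k - 1) (n : ℕ) :
    Summable fun k => |sTerm B q ε n k| := by
  have hle : ∀ k, |sTerm B q ε n k| ≤ (2:ℝ)⁻¹ ^ k := by
    intro k
    refine le_trans (sTerm_abs_le B q ε hq hε n k) (le_trans ?_ (dk_le q hq n k))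
    have h1 : (0:ℝ) < ∏ i ∈ Finset.Ico n (n + k + 1), (q i : ℝ) := qprod_pos q hq _
    have := inv_pos.mpr h1
    linarith
  exact Summable.of_nonneg_of_le (fun k => abs_nonneg _) hle
    (summable_geometric_of_lt_one (by norm_num) (by norm_num : (2:ℝ)⁻¹ < 1))

lemma sTerm_summable (hq : ∀ k, 2 ≤ q k) (hε : ∀ k, ε k ≤ q k - 1) (n : ℕ) :
    Summable (sTerm B q ε n) :=
  (sTerm_summable_abs B q ε hq hε n).of_abs

lemma tsum_abs_le_one (hq : ∀ k, 2 ≤ q k) (hε : ∀ k, ε k ≤ q k - 1) (n : ℕ) :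
    ∑' k, |sTerm B q ε n k| ≤ 1 := by
  apply Summable.tsum_le_of_sum_le (sTerm_summable_abs B q ε hq hε n)
  intro s
  obtain ⟨K, hK⟩ := s.exists_nat_subset_range
  calc ∑ k ∈ s, |sTerm B q ε n k| ≤ ∑ k ∈ Finset.range K, |sTerm B q ε n k| :=
        Finset.sum_le_sum_of_subset_of_nonneg hK (fun i _ _ => abs_nonneg _)
    _ ≤ ∑ k ∈ Finset.range K, ((∏ i ∈ Finset.Ico n (n + k), (q i : ℝ))⁻¹
          - (∏ i ∈ Finset.Ico n (n + k + 1), (q i : ℝ))⁻¹) :=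
        Finset.sum_le_sum (fun k _ => sTerm_abs_le B q ε hq hε n k)
    _ = (∏ i ∈ Finset.Ico n (n + 0), (q i : ℝ))⁻¹
          - (∏ i ∈ Finset.Ico n (n + K), (q i : ℝ))⁻¹ := by
        exact Finset.sum_range_sub' (fun k => (∏ i ∈ Finset.Ico n (n + k), (q i : ℝ))⁻¹) K
    _ ≤ 1 := by
        have : (0:ℝ) < ∏ i ∈ Finset.Ico n (n + K), (q i : ℝ) := qprod_pos q hq _
        simp only [Nat.add_zero, Finset.Ico_self, Finset.prod_empty, inv_one]
        linarith [inv_pos.mpr this]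

lemma shift_eq_tsum (n : ℕ) : signCantorShift B q ε n = ∑' k, sTerm B q ε n k := rfl

lemma shift_abs_le_one (hq : ∀ k, 2 ≤ q k) (hε : ∀ k, ε k ≤ q k - 1) (n : ℕ) :
    |signCantorShift B q ε n| ≤ 1 := by
  rw [shift_eq_tsum]
  have h1 : |∑' k, sTerm B q ε n k| ≤ ∑' k, |sTerm B q ε n k| := by
    simpa only [Real.norm_eq_abs] using
      norm_tsum_le_tsum_norm (f := sTerm B q ε n)
        (by simpa only [Real.norm_eq_abs] using sTerm_summable_abs B q ε hq hε n)
  exact h1.trans (tsum_abs_le_one B q ε hq hε n)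

lemma shift_rec (hq : ∀ k, 2 ≤ q k) (hε : ∀ k, ε k ≤ q k - 1) (n : ℕ) :
    signCantorShift B q ε (n + 1)
      = (q n : ℝ) * signCantorShift B q ε n - cantorSign B n * (ε n : ℝ) := by
  have hqn : (0:ℝ) < (q n : ℝ) := by
    exact_mod_cast Nat.lt_of_lt_of_le Nat.zero_lt_two (hq n)
  have hterm : ∀ k, sTerm B q ε n (k + 1) = sTerm B q ε (n + 1) k / (q n : ℝ) := by
    intro k
    unfold sTerm
    have h1 : n + (k + 1) = (n + 1) + k := by ring
    have h2 : ∏ i ∈ Finset.Ico n ((n + 1) + k + 1), (q i : ℝ)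
        = (q n : ℝ) * ∏ i ∈ Finset.Ico (n + 1) ((n + 1) + k + 1), (q i : ℝ) :=
      Finset.prod_eq_prod_Ico_succ_bot (by omega) _
    have hP : (0:ℝ) < ∏ i ∈ Finset.Ico (n + 1) ((n + 1) + k + 1), (q i : ℝ) :=
      qprod_pos q hq _
    rw [h1, h2, div_div, mul_comm ((q n : ℕ) : ℝ)]
  have hsum := shift_eq_tsum B q ε n
  rw [Summable.tsum_eq_zero_add (sTerm_summable B q ε hq hε n)] at hsum
  have h0 : sTerm B q ε n 0 = cantorSign B n * (ε n : ℝ) / (q n : ℝ) := by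
    unfold sTerm
    simp [Nat.Ico_succ_singleton]
  have htail : ∑' k, sTerm B q ε n (k + 1) = signCantorShift B q ε (n + 1) / (q n : ℝ) := by
    rw [shift_eq_tsum]
    simp_rw [hterm]
    exact tsum_div_const
  rw [h0, htail] at hsum
  field_simp at hsum ⊢
  linarith [hsum]

lemma num_rec (u : ℤ) (v : ℕ) (n : ℕ) :
    signCantorNum B q ε u v (n + 1)
      = (q n : ℤ) * signCantorNum B q ε u v n - (v : ℤ) * (cantorSignZ B n * (ε n : ℤ)) := by
  unfold signCantorNum
  rw [Finset.prod_range_succ, Finset.sum_range_succ, Finset.Ico_self, Finset.prod_empty]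
  have : ∀ j ∈ Finset.range n,
      cantorSignZ B j * (ε j : ℤ) * ∏ i ∈ Finset.Ico (j + 1) (n + 1), (q i : ℤ)
        = (cantorSignZ B j * (ε j : ℤ) * ∏ i ∈ Finset.Ico (j + 1) n, (q i : ℤ)) * (q n : ℤ) := by
    intro j hj
    rw [Finset.prod_Ico_succ_top (by simpa using Finset.mem_range.mp hj)]
    ring
  rw [Finset.sum_congr rfl this, ← Finset.sum_mul]
  ring

end Aux

/-- If `x = u/v` with `v ≥ 1`, `|u| ≤ v`, has a sign-variable Cantor
expansion with digits `(ε_n)`, then `σⁿ(x) = u_n/v` with `u_n ∈ ℤ`, `|u_n| ≤ v`;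
consequently `u_n = u_{n+m}` for some `n` and `m ≥ 1`, and `u_n` is constant on an
infinite set of indices. -/
theorem sign_variable_rational_shift_values (B : Set ℕ) (q ε : ℕ → ℕ)
    (hq : ∀ k, 2 ≤ q k) (hε : ∀ k, ε k ≤ q k - 1) (u : ℤ) (v : ℕ) (hv : 1 ≤ v)
    (hu : |u| ≤ (v : ℤ)) (x : ℝ)
    (hx : x = ∑' n : ℕ, cantorSign B n * (ε n : ℝ) / ∏ i ∈ Finset.range (n + 1), (q i : ℝ))
    (hxr : x = (u : ℝ) / v) :
    (∀ n : ℕ, signCantorShift B q ε n = (signCantorNum B q ε u v n : ℝ) / v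
        ∧ |signCantorNum B q ε u v n| ≤ (v : ℤ))
      ∧ (∃ n m : ℕ, 1 ≤ m ∧ signCantorNum B q ε u v n = signCantorNum B q ε u v (n + m))
      ∧ (∃ S : Set ℕ, S.Infinite ∧ ∃ c : ℤ, ∀ n ∈ S, signCantorNum B q ε u v n = c) := by
  have hv0 : (0:ℝ) < (v : ℝ) := by exact_mod_cast hv
  -- part 1a: shift = num / v
  have key : ∀ n, signCantorShift B q ε n = (signCantorNum B q ε u v n : ℝ) / v := by
    intro n
    induction n with
    | zero =>
        have h0 : signCantorShift B q ε 0 = x := by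
          rw [shift_eq_tsum, hx]
          apply tsum_congr
          intro k
          unfold sTerm
          simp [← Finset.range_eq_Ico]
        rw [h0, hxr]
        unfold signCantorNum
        simp
    | succ n ih =>
        rw [shift_rec B q ε hq hε n, ih]
        push_cast [num_rec B q ε u v n, cast_cantorSignZ]
        field_simp
        try ring
  have bound : ∀ n, |signCantorNum B q ε u v n| ≤ (v : ℤ) := by
    intro n
    have h1 := shift_abs_le_one B q ε hq hε n
    rw [key n, abs_div, abs_of_pos hv0, div_le_one hv0] at h1
    exact_mod_cast h1
  refine ⟨fun n => ⟨key n, bound n⟩, ?_, ?_⟩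
  · -- get an infinite fiber first
    have hmem : ∀ n, signCantorNum B q ε u v n ∈ Finset.Icc (-(v:ℤ)) (v:ℤ) := by
      intro n; rw [Finset.mem_Icc, ← abs_le]; exact bound n
    obtain ⟨c, hc⟩ := Finite.exists_infinite_fiber
      (fun n => (⟨signCantorNum B q ε u v n, hmem n⟩ : Finset.Icc (-(v:ℤ)) (v:ℤ)))
    have hS : {n | signCantorNum B q ε u v n = (c : ℤ)}.Infinite := by
      rw [← Set.infinite_coe_iff]
      refine Infinite.of_injective
        (fun p : (fun n => (⟨signCantorNum B q ε u v n, hmem n⟩ :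
            Finset.Icc (-(v:ℤ)) (v:ℤ))) ⁻¹' {c} =>
          (⟨p.1, by have := p.2; simp only [Set.mem_preimage, Set.mem_singleton_iff] at this
                    exact congrArg Subtype.val this⟩ :
            {n | signCantorNum B q ε u v n = (c : ℤ)})) ?_
      intro a b hab
      simpa [Subtype.ext_iff] using hab
    obtain ⟨n, hn⟩ := hS.nonempty
    obtain ⟨n', hn', hlt⟩ := hS.exists_gt n
    exact ⟨n, n' - n, by omega, by
      rw [show n + (n' - n) = n' by omega, hn, hn']⟩
  · have hmem : ∀ n, signCantorNum B q ε u v n ∈ Finset.Icc (-(v:ℤ)) (v:ℤ) := by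
      intro n; rw [Finset.mem_Icc, ← abs_le]; exact bound n
    obtain ⟨c, hc⟩ := Finite.exists_infinite_fiber
      (fun n => (⟨signCantorNum B q ε u v n, hmem n⟩ : Finset.Icc (-(v:ℤ)) (v:ℤ)))
    refine ⟨{n | signCantorNum B q ε u v n = (c : ℤ)}, ?_, (c : ℤ), fun n hn => hn⟩
    rw [← Set.infinite_coe_iff]
    refine Infinite.of_injective
      (fun p : (fun n => (⟨signCantorNum B q ε u v n, hmem n⟩ :
          Finset.Icc (-(v:ℤ)) (v:ℤ))) ⁻¹' {c} =>
        (⟨p.1, by have := p.2; simp only [Set.mem_preimage, Set.mem_singleton_iff] at this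
                  exact congrArg Subtype.val this⟩ :
          {n | signCantorNum B q ε u v n = (c : ℤ)})) ?_
    intro a b hab
    simpa [Subtype.ext_iff] using hab
end

section
/- The sequence s_k = ∑_{n > k, n ∈ N_B} (q_n − 1)/(q_{k+1} q_{k+2} ⋯ q_n) satisfies the recurrence s_k = q_k s_{k−1} if k ∉ N_B and s_k = q_k s_{k−1} − (q_k − 1) if k ∈ N_B, with s_1 = ∑_{k > 1, k ∈ N_B} (q_k − 1)/(q_2⋯q_k); moreover 0 ≤ s_k ≤ 1 for all k. -/
/-- `s_k = ∑_{n > k, n ∈ N_B} (q_n − 1)/(q_{k+1} ⋯ q_n)` (0-based indexing: `sSeq B q k`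
is the paper's `s_{k+1}`, summing over 0-based indices `n = k+1+j`). -/
noncomputable def sSeq (B : Set ℕ) (q : ℕ → ℕ) (k : ℕ) : ℝ :=
  ∑' j : ℕ, Set.indicator B
    (fun n => ((q n : ℝ) - 1) / ∏ i ∈ Finset.Ico (k + 1) (n + 1), (q i : ℝ)) (k + 1 + j)

namespace SSeqAux

/-- `aT q k j = (q_{k+1} ⋯ q_{k+j})⁻¹`. -/
noncomputable def aT (q : ℕ → ℕ) (k j : ℕ) : ℝ :=
  (∏ i ∈ Finset.Ico (k + 1) (k + 1 + j), (q i : ℝ))⁻¹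

lemma qpos (q : ℕ → ℕ) (hq : ∀ n, 2 ≤ q n) (n : ℕ) : (0 : ℝ) < q n := by
  have := hq n; positivity

lemma aT_pos (q : ℕ → ℕ) (hq : ∀ n, 2 ≤ q n) (k j : ℕ) : 0 < aT q k j := by
  have : 0 < ∏ i ∈ Finset.Ico (k + 1) (k + 1 + j), (q i : ℝ) :=
    Finset.prod_pos fun i _ => qpos q hq i
  exact inv_pos.mpr this

lemma aT_zero (q : ℕ → ℕ) (k : ℕ) : aT q k 0 = 1 := by simp [aT]

lemma aT_succ (q : ℕ → ℕ) (k j : ℕ) :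
    aT q k (j + 1) = aT q k j / (q (k + 1 + j) : ℝ) := by
  have h : k + 1 + (j + 1) = (k + 1 + j) + 1 := by ring
  rw [aT, h, Finset.prod_Ico_succ_top (by omega), mul_inv, aT, div_eq_mul_inv]

lemma aT_shift (q : ℕ → ℕ) (hq : ∀ n, 2 ≤ q n) (k j : ℕ) :
    (q (k + 1) : ℝ) * aT q k (j + 1) = aT q (k + 1) j := by
  have h : k + 1 + (j + 1) = (k + 1 + 1) + j := by ring
  have hlt : k + 1 < k + 1 + (j + 1) := by omega
  rw [aT, Finset.prod_eq_prod_Ico_succ_bot hlt, mul_inv, ← mul_assoc,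
    mul_inv_cancel₀ (ne_of_gt (qpos q hq (k + 1))), one_mul, aT, h]

lemma aT_tel (q : ℕ → ℕ) (hq : ∀ n, 2 ≤ q n) (k j : ℕ) :
    aT q k j - aT q k (j + 1) = ((q (k + 1 + j) : ℝ) - 1) * aT q k (j + 1) := by
  have hqj := qpos q hq (k + 1 + j)
  rw [aT_succ]
  field_simp

lemma aT_antitone (q : ℕ → ℕ) (hq : ∀ n, 2 ≤ q n) (k j : ℕ) :
    aT q k (j + 1) ≤ aT q k j := by
  rw [aT_succ]
  have h1 : (1 : ℝ) ≤ q (k + 1 + j) := by exact_mod_cast le_trans (by norm_num) (hq _)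
  calc aT q k j / (q (k + 1 + j) : ℝ) ≤ aT q k j / 1 :=
        div_le_div_of_nonneg_left (le_of_lt (aT_pos q hq k j)) one_pos h1
    _ = aT q k j := by rw [div_one]

lemma aT_le_pow (q : ℕ → ℕ) (hq : ∀ n, 2 ≤ q n) (k j : ℕ) : aT q k j ≤ (2 : ℝ)⁻¹ ^ j := by
  have h2 : ((2 : ℝ) ^ j)⁻¹ = (2 : ℝ)⁻¹ ^ j := by rw [inv_pow]
  rw [aT, ← h2]
  apply inv_anti₀ (by positivity)
  calc (2 : ℝ) ^ j = ∏ _i ∈ Finset.Ico (k + 1) (k + 1 + j), (2 : ℝ) := by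
        rw [Finset.prod_const, Nat.card_Ico]; congr 1; omega
    _ ≤ ∏ i ∈ Finset.Ico (k + 1) (k + 1 + j), (q i : ℝ) := by
        apply Finset.prod_le_prod (fun i _ => by norm_num) (fun i _ => by exact_mod_cast hq i)

lemma hasSum_tel (q : ℕ → ℕ) (hq : ∀ n, 2 ≤ q n) (k : ℕ) :
    HasSum (fun j => aT q k j - aT q k (j + 1)) 1 := by
  rw [hasSum_iff_tendsto_nat_of_nonneg
    (fun j => sub_nonneg.mpr (aT_antitone q hq k j))]
  have heq : ∀ n : ℕ, ∑ j ∈ Finset.range n, (aT q k j - aT q k (j + 1))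
      = aT q k 0 - aT q k n := fun n => Finset.sum_range_sub' (aT q k) n
  simp only [heq, aT_zero]
  have h0 : Filter.Tendsto (fun n => aT q k n) Filter.atTop (nhds 0) := by
    apply squeeze_zero (fun n => le_of_lt (aT_pos q hq k n)) (aT_le_pow q hq k)
    exact tendsto_pow_atTop_nhds_zero_of_lt_one (by norm_num : (0:ℝ) ≤ 2⁻¹) (by norm_num)
  have := Filter.Tendsto.const_sub (1 : ℝ) h0
  simpa using this

end SSeqAux

/-- The sequence `s_k` satisfies `s_k = q_k s_{k−1}` if `k ∉ N_B`,
`s_k = q_k s_{k−1} − (q_k − 1)` if `k ∈ N_B`, and `0 ≤ s_k ≤ 1` for all `k`. -/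
theorem sSeq_recurrence_and_bounds (B : Set ℕ) (q : ℕ → ℕ) (hq : ∀ n, 2 ≤ q n) :
    (∀ k : ℕ, (k + 1) ∉ B → sSeq B q (k + 1) = (q (k + 1) : ℝ) * sSeq B q k)
      ∧ (∀ k : ℕ, (k + 1) ∈ B →
          sSeq B q (k + 1) = (q (k + 1) : ℝ) * sSeq B q k - ((q (k + 1) : ℝ) - 1))
      ∧ ∀ k : ℕ, 0 ≤ sSeq B q k ∧ sSeq B q k ≤ 1 := by
  classical
  set a := SSeqAux.aT q with ha
  set f : ℕ → ℕ → ℝ := fun k j => Set.indicator B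
    (fun n => ((q n : ℝ) - 1) / ∏ i ∈ Finset.Ico (k + 1) (n + 1), (q i : ℝ)) (k + 1 + j)
    with hf
  have hfval : ∀ k j, f k j = Set.indicator B (fun _ => a k j - a k (j + 1)) (k + 1 + j) := by
    intro k j
    by_cases hmem : (k + 1 + j) ∈ B
    · simp only [hf, Set.indicator_of_mem hmem]
      rw [ha, SSeqAux.aT_tel q hq k j]
      have : k + 1 + j + 1 = k + 1 + (j + 1) := by ring
      rw [this, div_eq_mul_inv]
      rfl
    · simp [hf, Set.indicator_of_notMem hmem]
  have hs : ∀ k, sSeq B q k = ∑' j, f k j := fun k => rfl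
  have hf_nonneg : ∀ k j, 0 ≤ f k j := by
    intro k j
    rw [hfval]
    apply Set.indicator_nonneg
    intro _ _
    exact sub_nonneg.mpr (SSeqAux.aT_antitone q hq k j)
  have hf_le : ∀ k j, f k j ≤ a k j - a k (j + 1) := by
    intro k j
    rw [hfval]
    by_cases hmem : (k + 1 + j) ∈ B
    · simp [Set.indicator_of_mem hmem]
    · rw [Set.indicator_of_notMem hmem]
      exact sub_nonneg.mpr (SSeqAux.aT_antitone q hq k j)
  have htel : ∀ k, HasSum (fun j => a k j - a k (j + 1)) 1 := SSeqAux.hasSum_tel q hq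
  have hsumm : ∀ k, Summable (f k) := fun k =>
    Summable.of_nonneg_of_le (hf_nonneg k) (hf_le k) (htel k).summable
  have hshift : ∀ k j, (q (k + 1) : ℝ) * f k (j + 1) = f (k + 1) j := by
    intro k j
    rw [hfval, hfval]
    have hn : (k + 1) + 1 + j = k + 1 + (j + 1) := by ring
    by_cases hmem : (k + 1 + (j + 1)) ∈ B
    · have hmem' : (k + 1) + 1 + j ∈ B := by rwa [hn]
      rw [Set.indicator_of_mem hmem, Set.indicator_of_mem hmem', mul_sub, ha,
        SSeqAux.aT_shift q hq k j, SSeqAux.aT_shift q hq k (j + 1)]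
    · have hmem' : (k + 1) + 1 + j ∉ B := by rwa [hn]
      rw [Set.indicator_of_notMem hmem, Set.indicator_of_notMem hmem', mul_zero]
  have hzero : ∀ k, (q (k + 1) : ℝ) * f k 0 =
      Set.indicator B (fun _ => (q (k + 1) : ℝ) - 1) (k + 1) := by
    intro k
    rw [hfval]
    by_cases hmem : (k + 1 + 0) ∈ B
    · rw [Set.indicator_of_mem hmem, Set.indicator_of_mem (by simpa using hmem)]
      rw [ha, SSeqAux.aT_zero, mul_sub, mul_one, SSeqAux.aT_shift q hq k 0,
        SSeqAux.aT_zero]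
    · rw [Set.indicator_of_notMem hmem, Set.indicator_of_notMem (by simpa using hmem), mul_zero]
  have hrec : ∀ k : ℕ, (q (k + 1) : ℝ) * sSeq B q k =
      Set.indicator B (fun _ => (q (k + 1) : ℝ) - 1) (k + 1) + sSeq B q (k + 1) := by
    intro k
    rw [hs, hs, ← tsum_mul_left]
    have hsum2 : Summable (fun j => (q (k + 1) : ℝ) * f k j) := (hsumm k).mul_left _
    rw [Summable.tsum_eq_zero_add hsum2, hzero k]
    congr 1
    exact tsum_congr fun j => hshift k j
  refine ⟨?_, ?_, ?_⟩
  · intro k hk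
    have := hrec k
    rw [Set.indicator_of_notMem hk] at this
    linarith
  · intro k hk
    have := hrec k
    rw [Set.indicator_of_mem hk] at this
    linarith
  · intro k
    constructor
    · rw [hs]; exact tsum_nonneg (hf_nonneg k)
    · rw [hs]
      calc ∑' j, f k j ≤ ∑' j, (a k j - a k (j + 1)) :=
            Summable.tsum_le_tsum (hf_le k) (hsumm k) (htel k).summable
        _ = 1 := (htel k).tsum_eq
end

section
/- If x = ∑_{n=1}^∞ a_n ε_n/(q_1⋯q_n) = p/r where p ∈ ℤ, r ∈ ℕ, gcd(|p|, r) = 1, |p| < r, and x lies in the half-open cylinder [inf Λ_{ε_1…ε_k}, sup Λ_{ε_1…ε_k}) for each k, then ε_k = |⌊q_k(Δ_{k−1} − a_{k−1} r ε_{k−1})/r + s_k⌋| for all k ≥ 2, where Δ_1 = p q_1, ε_1 = |⌊Δ_1/r + s_1⌋|, Δ_k = q_k(Δ_{k−1} − a_{k−1} r ε_{k−1}), and s_k is defined by s_1 = ∑_{k > 1, k ∈ N_B}(q_k−1)/(q_2⋯q_k) with s_k = q_k s_{k−1} if k ∉ N_B and s_k = q_k s_{k−1} − (q_k − 1) if k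 ∈ N_B. -/
section Aux

variable (q : ℕ → ℕ)

lemma cantorSignZ_cast (B : Set ℕ) (n : ℕ) : ((cantorSignZ B n : ℤ) : ℝ) = cantorSign B n := by
  unfold cantorSign cantorSignZ; split_ifs <;> norm_num

/-- full-denominator tail term -/
noncomputable def gTerm (k j : ℕ) : ℝ :=
  ((q (k + 1 + j) : ℝ) - 1) / ∏ i ∈ Finset.range (k + 1 + j + 1), (q i : ℝ)

variable {q}

lemma qpos (hq : ∀ n, 2 ≤ q n) (n : ℕ) : (0 : ℝ) < q n := by
  have : (2 : ℝ) ≤ q n := by exact_mod_cast hq n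
  linarith

lemma Ppos (hq : ∀ n, 2 ≤ q n) (s : Finset ℕ) : (0 : ℝ) < ∏ i ∈ s, (q i : ℝ) :=
  Finset.prod_pos fun i _ => qpos hq i

lemma two_pow_le_prod (hq : ∀ n, 2 ≤ q n) (m : ℕ) :
    (2 : ℝ) ^ m ≤ ∏ i ∈ Finset.range m, (q i : ℝ) := by
  calc (2 : ℝ) ^ m = ∏ _i ∈ Finset.range m, (2 : ℝ) := by
        rw [Finset.prod_const, Finset.card_range]
    _ ≤ ∏ i ∈ Finset.range m, (q i : ℝ) :=
        Finset.prod_le_prod (fun _ _ => by norm_num)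
          (fun i _ => by exact_mod_cast hq i)

lemma gTerm_nonneg (hq : ∀ n, 2 ≤ q n) (k j : ℕ) : 0 ≤ gTerm q k j := by
  have h1 : (1 : ℝ) ≤ q (k + 1 + j) := by
    have := qpos hq (k + 1 + j); have : (2:ℝ) ≤ q (k+1+j) := by exact_mod_cast hq _
    linarith
  exact div_nonneg (by linarith) (le_of_lt (Ppos hq _))

lemma gTerm_le (hq : ∀ n, 2 ≤ q n) (k j : ℕ) : gTerm q k j ≤ (1 / 2 : ℝ) ^ j := by
  set m := k + 1 + j with hm
  have hqm : (0:ℝ) < q m := qpos hq m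
  have hPm : (0:ℝ) < ∏ i ∈ Finset.range m, (q i : ℝ) := Ppos hq _
  have hsplit : ∏ i ∈ Finset.range (m + 1), (q i : ℝ)
      = (∏ i ∈ Finset.range m, (q i : ℝ)) * q m := Finset.prod_range_succ _ _
  have h1 : gTerm q k j ≤ 1 / ∏ i ∈ Finset.range m, (q i : ℝ) := by
    unfold gTerm
    rw [← hm, hsplit, div_le_div_iff₀ (by positivity) hPm]
    nlinarith
  have h2 : (1 : ℝ) / ∏ i ∈ Finset.range m, (q i : ℝ) ≤ 1 / (2:ℝ) ^ m := by
    apply one_div_le_one_div_of_le (by positivity) (two_pow_le_prod hq m)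
  have h3 : (1 : ℝ) / (2:ℝ) ^ m ≤ 1 / (2:ℝ) ^ j := by
    apply one_div_le_one_div_of_le (by positivity)
    exact pow_le_pow_right₀ (by norm_num) (by omega)
  calc gTerm q k j ≤ _ := h1
    _ ≤ _ := h2
    _ ≤ 1 / (2:ℝ)^j := h3
    _ = (1/2 : ℝ)^j := by rw [div_pow, one_pow]

lemma gTerm_summable (hq : ∀ n, 2 ≤ q n) (k : ℕ) : Summable (gTerm q k) :=
  Summable.of_nonneg_of_le (gTerm_nonneg hq k) (gTerm_le hq k)
    (summable_geometric_of_lt_one (by norm_num) (by norm_num))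

lemma ind_summable (hq : ∀ n, 2 ≤ q n) (S : Set ℕ) (k : ℕ) :
    Summable (fun j : ℕ => Set.indicator S
      (fun n => ((q n : ℝ) - 1) / ∏ i ∈ Finset.range (n + 1), (q i : ℝ)) (k + 1 + j)) := by
  apply Summable.of_nonneg_of_le _ _ (gTerm_summable hq k)
  · intro j
    apply Set.indicator_nonneg
    intro n _
    have : (2:ℝ) ≤ q n := by exact_mod_cast hq n
    exact div_nonneg (by linarith) (le_of_lt (Ppos hq _))
  · intro j
    have := gTerm_nonneg hq k j
    by_cases h : (k + 1 + j) ∈ S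
    · rw [Set.indicator_of_mem h]; exact le_refl _
    · rw [Set.indicator_of_notMem h]; exact this

/-- telescoping: ∑ gTerm = 1 / P k -/
lemma gTerm_tsum (hq : ∀ n, 2 ≤ q n) (k : ℕ) :
    ∑' j, gTerm q k j = 1 / ∏ i ∈ Finset.range (k + 1), (q i : ℝ) := by
  set P : ℝ := ∏ i ∈ Finset.range (k + 1), (q i : ℝ) with hP
  have hPpos : 0 < P := Ppos hq _
  set e : ℕ → ℝ := fun j => (P * ∏ i ∈ Finset.Ico (k + 1) (k + 1 + j), (q i : ℝ))⁻¹ with he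
  have he0 : e 0 = 1 / P := by simp [he]
  have hge : ∀ j, gTerm q k j = e j - e (j + 1) := by
    intro j
    have hle : k + 1 ≤ k + 1 + j := by omega
    have hsplit : ∏ i ∈ Finset.range (k + 1 + j + 1), (q i : ℝ)
        = P * ∏ i ∈ Finset.Ico (k + 1) (k + 1 + j + 1), (q i : ℝ) := by
      rw [hP, Finset.prod_range_mul_prod_Ico _ (by omega)]
    have htop : ∏ i ∈ Finset.Ico (k + 1) (k + 1 + j + 1), (q i : ℝ)
        = (∏ i ∈ Finset.Ico (k + 1) (k + 1 + j), (q i : ℝ)) * q (k + 1 + j) :=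
      Finset.prod_Ico_succ_top hle _
    have hI : (0:ℝ) < ∏ i ∈ Finset.Ico (k + 1) (k + 1 + j), (q i : ℝ) := Ppos hq _
    have hqj : (0:ℝ) < q (k + 1 + j) := qpos hq _
    unfold gTerm
    rw [hsplit, htop, he]
    show _ = (P * ∏ i ∈ Finset.Ico (k+1) (k+1+j), (q i : ℝ))⁻¹
      - (P * ∏ i ∈ Finset.Ico (k+1) (k+1+j+1), (q i : ℝ))⁻¹
    rw [htop]
    field_simp
  have hsum : Summable (gTerm q k) := gTerm_summable hq k
  have htend := hsum.hasSum.tendsto_sum_nat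
  have hpart : ∀ n, ∑ j ∈ Finset.range n, gTerm q k j = e 0 - e n := by
    intro n
    rw [Finset.sum_congr rfl (fun j _ => hge j)]
    exact Finset.sum_range_sub' e n
  have het : Filter.Tendsto e Filter.atTop (nhds 0) := by
    apply squeeze_zero (fun n => by positivity)
      (g := fun n => (1 / P) * (1 / 2 : ℝ) ^ n)
    · intro n
      rw [he]
      have h2 : (2:ℝ) ^ n ≤ ∏ i ∈ Finset.Ico (k + 1) (k + 1 + n), (q i : ℝ) := by
        calc (2:ℝ)^n = ∏ _i ∈ Finset.Ico (k+1) (k+1+n), (2:ℝ) := by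
              rw [Finset.prod_const, Nat.card_Ico]; congr 1; omega
          _ ≤ _ := Finset.prod_le_prod (fun _ _ => by norm_num)
              (fun i _ => by exact_mod_cast hq i)
      have hI : (0:ℝ) < ∏ i ∈ Finset.Ico (k + 1) (k + 1 + n), (q i : ℝ) := Ppos hq _
      have hkey : (1/2:ℝ)^n = ((2:ℝ)^n)⁻¹ := by rw [div_pow, one_pow, one_div]
      show (P * ∏ i ∈ Finset.Ico (k + 1) (k + 1 + n), (q i : ℝ))⁻¹ ≤ 1 / P * (1/2:ℝ)^n
      rw [mul_inv, one_div, hkey]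
      gcongr
    · rw [show (0:ℝ) = (1/P) * 0 by ring]
      exact (tendsto_pow_atTop_nhds_zero_of_lt_one (by norm_num) (by norm_num)).const_mul _
  have : Filter.Tendsto (fun n => ∑ j ∈ Finset.range n, gTerm q k j)
      Filter.atTop (nhds (e 0 - 0)) := by
    simp only [hpart]
    exact Filter.Tendsto.const_sub _ het
  have := tendsto_nhds_unique htend this
  rw [this, he0, sub_zero]

/-- sum of the two tails = 1/P -/
lemma LU_sum (B : Set ℕ) (hq : ∀ n, 2 ≤ q n) (k : ℕ) :
    (∑' j : ℕ, Set.indicator B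
        (fun n => ((q n : ℝ) - 1) / ∏ i ∈ Finset.range (n + 1), (q i : ℝ)) (k + 1 + j))
    + (∑' j : ℕ, Set.indicator Bᶜ
        (fun n => ((q n : ℝ) - 1) / ∏ i ∈ Finset.range (n + 1), (q i : ℝ)) (k + 1 + j))
    = 1 / ∏ i ∈ Finset.range (k + 1), (q i : ℝ) := by
  rw [← gTerm_tsum hq k, ← Summable.tsum_add (ind_summable hq B k) (ind_summable hq Bᶜ k)]
  congr 1
  funext j
  exact Set.indicator_self_add_compl_apply B _ (k + 1 + j)

/-- `sSeq B q k = P k * L k`. -/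
lemma sSeq_eq (B : Set ℕ) (hq : ∀ n, 2 ≤ q n) (k : ℕ) :
    sSeq B q k = (∏ i ∈ Finset.range (k + 1), (q i : ℝ)) *
      ∑' j : ℕ, Set.indicator B
        (fun n => ((q n : ℝ) - 1) / ∏ i ∈ Finset.range (n + 1), (q i : ℝ)) (k + 1 + j) := by
  rw [← tsum_mul_left]
  unfold sSeq
  congr 1
  funext j
  by_cases h : (k + 1 + j) ∈ B
  · rw [Set.indicator_of_mem h, Set.indicator_of_mem h]
    have hsplit : ∏ i ∈ Finset.range (k + 1 + j + 1), (q i : ℝ)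
        = (∏ i ∈ Finset.range (k + 1), (q i : ℝ))
          * ∏ i ∈ Finset.Ico (k + 1) (k + 1 + j + 1), (q i : ℝ) :=
      (Finset.prod_range_mul_prod_Ico _ (by omega)).symm
    have hP : (0:ℝ) < ∏ i ∈ Finset.range (k+1), (q i : ℝ) := Ppos hq _
    have hI : (0:ℝ) < ∏ i ∈ Finset.Ico (k + 1) (k + 1 + j + 1), (q i : ℝ) := Ppos hq _
    rw [hsplit]
    field_simp
  · rw [Set.indicator_of_notMem h, Set.indicator_of_notMem h, mul_zero]

end Aux

/-- If `x = ∑ a_n ε_n/(q_1⋯q_n) = p/r` in lowest terms with `|p| < r`, and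
`x` lies in the half-open cylinder `[inf Λ_{ε_1…ε_k}, sup Λ_{ε_1…ε_k})` for each `k`, then
`ε_1 = |⌊Δ_1/r + s_1⌋|` and `ε_k = |⌊q_k(Δ_{k−1} − a_{k−1} r ε_{k−1})/r + s_k⌋|` for `k ≥ 2`,
where `Δ_1 = p q_1` and `Δ_k = q_k(Δ_{k−1} − a_{k−1} r ε_{k−1})`.
(0-based indexing throughout: `ε k`, `Δ k`, `sSeq B q k` are the paper's `ε_{k+1}`,
`Δ_{k+1}`, `s_{k+1}`.) -/
theorem sign_variable_digits_of_rational (B : Set ℕ) (q : ℕ → ℕ) (hq : ∀ n, 2 ≤ q n)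
    (ε : ℕ → ℕ) (hε : ∀ n, ε n ≤ q n - 1)
    (p : ℤ) (r : ℕ) (hr : 0 < r) (hpr : p.natAbs < r) (hcop : Nat.Coprime p.natAbs r)
    (x : ℝ)
    (hx : x = ∑' n : ℕ, cantorSign B n * (ε n : ℝ) / ∏ i ∈ Finset.range (n + 1), (q i : ℝ))
    (hxr : x = (p : ℝ) / r)
    (hcyl : ∀ k : ℕ,
      (∑ i ∈ Finset.range (k + 1),
          cantorSign B i * (ε i : ℝ) / ∏ j ∈ Finset.range (i + 1), (q j : ℝ))
        - (∑' j : ℕ, Set.indicator B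
            (fun n => ((q n : ℝ) - 1) / ∏ i ∈ Finset.range (n + 1), (q i : ℝ)) (k + 1 + j))
        ≤ x
      ∧ x < (∑ i ∈ Finset.range (k + 1),
          cantorSign B i * (ε i : ℝ) / ∏ j ∈ Finset.range (i + 1), (q j : ℝ))
        + (∑' j : ℕ, Set.indicator Bᶜ
            (fun n => ((q n : ℝ) - 1) / ∏ i ∈ Finset.range (n + 1), (q i : ℝ)) (k + 1 + j)))
    (Δ : ℕ → ℤ)
    (hΔ0 : Δ 0 = p * q 0)
    (hΔ : ∀ k, Δ (k + 1) = (q (k + 1) : ℤ) * (Δ k - cantorSignZ B k * r * ε k)) :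
    (ε 0 : ℤ) = |⌊(Δ 0 : ℝ) / r + sSeq B q 0⌋|
      ∧ ∀ k : ℕ, (ε (k + 1) : ℤ) =
          |⌊((q (k + 1) : ℝ) * ((Δ k : ℝ) - (cantorSignZ B k : ℝ) * r * ε k)) / r
              + sSeq B q (k + 1)⌋| := by
  have hrR : (0:ℝ) < r := by exact_mod_cast hr
  have hrne : (r:ℝ) ≠ 0 := ne_of_gt hrR
  have hPk : ∀ k, (0:ℝ) < ∏ i ∈ Finset.range (k+1), (q i : ℝ) := fun k => Ppos hq _
  -- Δ k as scaled remainder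
  have hΔx : ∀ k, (Δ k : ℝ) = r * (∏ i ∈ Finset.range (k+1), (q i:ℝ)) *
      (x - ∑ i ∈ Finset.range k,
        cantorSign B i * (ε i:ℝ) / ∏ j ∈ Finset.range (i+1), (q j:ℝ)) := by
    intro k
    induction k with
    | zero =>
      rw [hΔ0, hxr]
      push_cast
      simp only [Finset.range_zero, Finset.sum_empty, Finset.range_one, Finset.prod_singleton,
        sub_zero]
      field_simp
    | succ k ih =>
      rw [hΔ k]
      push_cast [cantorSignZ_cast]
      rw [ih, Finset.prod_range_succ (fun i => ((q i : ℝ))) (k+1), Finset.sum_range_succ]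
      have h1 : (∏ j ∈ Finset.range (k+1), (q j:ℝ)) ≠ 0 := ne_of_gt (hPk k)
      have hc : (∏ j ∈ Finset.range (k+1), (q j:ℝ)) *
          (cantorSign B k * (ε k:ℝ) / ∏ j ∈ Finset.range (k+1), (q j:ℝ))
          = cantorSign B k * (ε k:ℝ) := by field_simp
      linear_combination ((r:ℝ) * (q (k+1))) * hc
  -- the key floor computation
  have key : ∀ k, ⌊(Δ k : ℝ)/r + sSeq B q k⌋ = cantorSignZ B k * ε k := by
    intro k
    obtain ⟨h1, h2⟩ := hcyl k
    have hLU := LU_sum B hq k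
    set L := ∑' j : ℕ, Set.indicator B
        (fun n => ((q n:ℝ)-1)/∏ i ∈ Finset.range (n+1), (q i:ℝ)) (k+1+j) with hL
    set U := ∑' j : ℕ, Set.indicator Bᶜ
        (fun n => ((q n:ℝ)-1)/∏ i ∈ Finset.range (n+1), (q i:ℝ)) (k+1+j) with hU
    set P := ∏ i ∈ Finset.range (k+1), (q i:ℝ) with hPdef
    set Tk := ∑ i ∈ Finset.range k,
        cantorSign B i * (ε i:ℝ) / ∏ j ∈ Finset.range (i+1), (q j:ℝ) with hTk
    set a : ℝ := cantorSign B k * (ε k : ℝ) with ha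
    have hP : (0:ℝ) < P := hPk k
    have hTsucc : (∑ i ∈ Finset.range (k+1),
        cantorSign B i * (ε i:ℝ) / ∏ j ∈ Finset.range (i+1), (q j:ℝ)) = Tk + a / P :=
      Finset.sum_range_succ _ k
    rw [hTsucc] at h1 h2
    have hy : (Δ k:ℝ)/r + sSeq B q k = P * ((x - Tk) + L) := by
      rw [hΔx k, sSeq_eq B hq k, ← hL, ← hPdef, ← hTk]
      field_simp
    have hlow : a ≤ (Δ k:ℝ)/r + sSeq B q k := by
      rw [hy]
      have h1' : a / P ≤ (x - Tk) + L := by linarith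
      have := mul_le_mul_of_nonneg_left h1' (le_of_lt hP)
      calc a = P * (a / P) := by field_simp
        _ ≤ P * ((x - Tk) + L) := this
    have hhigh : (Δ k:ℝ)/r + sSeq B q k < a + 1 := by
      rw [hy]
      have h2' : (x - Tk) + L < a / P + 1 / P := by linarith
      have := mul_lt_mul_of_pos_left h2' hP
      calc P * ((x - Tk) + L) < P * (a / P + 1 / P) := this
        _ = a + 1 := by field_simp
    have hcast : ((cantorSignZ B k * (ε k : ℤ) : ℤ) : ℝ) = a := by
      push_cast [cantorSignZ_cast]
      rw [ha]
    rw [Int.floor_eq_iff]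
    constructor
    · rw [hcast]; exact hlow
    · push_cast [hcast]; exact hhigh
  have habs : ∀ k, (ε k : ℤ) = |⌊(Δ k:ℝ)/r + sSeq B q k⌋| := by
    intro k
    rw [key k, abs_mul]
    have h1 : |cantorSignZ B k| = 1 := by
      unfold cantorSignZ; split_ifs <;> norm_num
    rw [h1, one_mul, Int.abs_natCast]
  refine ⟨habs 0, fun k => ?_⟩
  have heq : ((q (k+1) : ℝ) * ((Δ k:ℝ) - (cantorSignZ B k:ℝ)*r*(ε k : ℝ)))/r
      = (Δ (k+1):ℝ)/r := by
    rw [hΔ k]; push_cast; ring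
  rw [heq]
  exact habs (k+1)
end
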